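/- arXiv:1212.4442 — 2 statements merged into one kernel-verified Lean document; each statement's English description precedes it below -/
import Mathlib

section
/- The Ehrhart h*-vector of Q_n is (1,1,...,1,0,...,0) with exactly n ones: h*_i = 1 for 0 ≤ i ≤ n−1 and h*_i = 0 for n ≤ i ≤ 2n−2. Equivalently, the Ehrhart series of Q_n is (1 + t + ... + t^{n−1})/(1−t)^{2n−1}. -/
open Matrix Finset Pointwise

variable (n : ℕ) [NeZero n]

/-- Permutation matrix of `σ`: entries `δ_{i, σ(j)}`. -/
def permMat (σ : Equiv.Perm (ZMod n)) : Matrix (ZMod n) (ZMod n) ℝ :=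
  Matrix.of fun i j => if i = σ j then 1 else 0

/-- Rotation `x ↦ x + 1` of the regular n-gon with vertex set `ZMod n`. -/
def rot : Equiv.Perm (ZMod n) := Equiv.addRight 1

/-- Reflection `x ↦ -x` of the regular n-gon. -/
def rfl' : Equiv.Perm (ZMod n) := Equiv.neg (ZMod n)

/-- The dihedral group `D_n ≤ S_n`, symmetries of the regular n-gon. -/
def dihedral : Subgroup (Equiv.Perm (ZMod n)) := Subgroup.closure {rot n, rfl' n}

/-- Adjacency matrix of the n-cycle `C_n`. -/
def cycAdj : Matrix (ZMod n) (ZMod n) ℝ :=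
  Matrix.of fun i j => if j = i + 1 ∨ j = i - 1 then 1 else 0

/-- The permutation polytope `DP_n = conv{M_σ : σ ∈ D_n} ⊆ ℝ^{n×n}`. -/
def DP : Set (Matrix (ZMod n) (ZMod n) ℝ) :=
  convexHull ℝ {M | ∃ σ ∈ dihedral n, M = permMat n σ}

/-- The cyclic shift matrix `R`. -/
def Rmat : Matrix (ZMod n) (ZMod n) ℝ := Matrix.of fun i j => if j = i + 1 then 1 else 0

/-- The `2n` rows of `W = [[I,...,I],[I,R,...,R^{n-1}]]`, viewed as vectors in
`ℝ^{n²} = Matrix (ZMod n) (ZMod n) ℝ`; the first matrix coordinate is the block index. -/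
def Wrow : Bool × ZMod n → Matrix (ZMod n) (ZMod n) ℝ
  | (false, k) => Matrix.of fun _ j => if j = k then 1 else 0
  | (true, k) => Matrix.of fun b j => (Rmat n ^ b.val) k j

/-- The polytope `Q_n ⊆ ℝ^{n²}`. -/
def Qpoly : Set (Matrix (ZMod n) (ZMod n) ℝ) := convexHull ℝ (Set.range (Wrow n))

/-- A point of `ℝ^{n²}` is a lattice point if all its coordinates are integers. -/
def IsInt (x : Matrix (ZMod n) (ZMod n) ℝ) : Prop := ∀ b j, ∃ z : ℤ, x b j = (z : ℝ)

set_option linter.unusedSectionVars false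

theorem Rpow_apply (t : ℕ) (k j : ZMod n) :
    (Rmat n ^ t) k j = if j = k + (t : ZMod n) then 1 else 0 := by
  induction t generalizing j with
  | zero => simp [Matrix.one_apply, eq_comm]
  | succ t ih =>
    rw [pow_succ, Matrix.mul_apply]
    simp only [ih]
    simp only [Rmat, Matrix.of_apply]
    rw [Finset.sum_eq_single (k + (t : ZMod n))]
    · push_cast
      simp [add_assoc]
    · intro l _ hl
      simp [hl]
    · simp

theorem Wrow_false (k : ZMod n) (b j : ZMod n) :
    Wrow n (false, k) b j = if j = k then 1 else 0 := rfl

theorem Wrow_true (k : ZMod n) (b j : ZMod n) :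
    Wrow n (true, k) b j = if j = k + b then 1 else 0 := by
  show (Rmat n ^ b.val) k j = _
  rw [Rpow_apply, ZMod.natCast_val, ZMod.cast_id]

def combSet (m : ℝ) : Set (Matrix (ZMod n) (ZMod n) ℝ) :=
  {x | ∃ α β : ZMod n → ℝ, (∀ j, 0 ≤ α j) ∧ (∀ k, 0 ≤ β k) ∧
    ((∑ j, α j) + ∑ k, β k) = m ∧ ∀ b j, x b j = α j + β (j - b)}

theorem convex_combSet (m : ℝ) : Convex ℝ (combSet n m) := by
  rintro x ⟨α, β, hα, hβ, hs, hx⟩ y ⟨α', β', hα', hβ', hs', hy⟩ a b ha hb hab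
  refine ⟨a • α + b • α', a • β + b • β', ?_, ?_, ?_, ?_⟩
  · intro j
    simp only [Pi.add_apply, Pi.smul_apply, smul_eq_mul]
    exact add_nonneg (mul_nonneg ha (hα j)) (mul_nonneg hb (hα' j))
  · intro k
    simp only [Pi.add_apply, Pi.smul_apply, smul_eq_mul]
    exact add_nonneg (mul_nonneg ha (hβ k)) (mul_nonneg hb (hβ' k))
  · simp only [Pi.add_apply, Pi.smul_apply, smul_eq_mul, Finset.sum_add_distrib,
      ← Finset.mul_sum]
    linear_combination a * hs + b * hs' + m * hab
  · intro c j
    simp only [Pi.add_apply, Pi.smul_apply, smul_eq_mul, Matrix.add_apply, Matrix.smul_apply,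
      hx c j, hy c j]
    ring

theorem Qpoly_eq : Qpoly n = combSet n 1 := by
  apply le_antisymm
  · apply convexHull_min _ (convex_combSet n 1)
    rintro x ⟨⟨b, k⟩, rfl⟩
    cases b
    · exact ⟨fun j => if j = k then 1 else 0, 0, fun j => by positivity, fun k => le_refl 0,
        by simp, fun b j => by simp [Wrow_false]⟩
    · refine ⟨0, fun j => if j = k then 1 else 0, fun j => le_refl 0, fun j => by positivity,
        by simp, fun b j => ?_⟩
      rw [Wrow_true]
      simp only [Pi.zero_apply, zero_add]
      congr 1
      simp [sub_eq_iff_eq_add]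
  · rintro x ⟨α, β, hα, hβ, hs, hx⟩
    have hw : ∑ p : Bool × ZMod n, (if p.1 then β p.2 else α p.2) = 1 := by
      rw [Fintype.sum_prod_type]
      simpa [add_comm] using hs
    have hx' : x = Finset.univ.centerMass
        (fun p : Bool × ZMod n => if p.1 then β p.2 else α p.2) (Wrow n) := by
      rw [Finset.centerMass, hw, inv_one, one_smul]
      funext b j
      rw [Matrix.sum_apply, Fintype.sum_prod_type, Fintype.sum_bool]
      have h1 : ∑ k, (if (false : Bool) then β k else α k) * Wrow n (false, k) b j = α j := by
        simp only [Bool.false_eq_true, if_false, Wrow_false, mul_ite, mul_one, mul_zero]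
        simp [eq_comm]
      have h2 : ∑ k, (if (true : Bool) then β k else α k) * Wrow n (true, k) b j
          = β (j - b) := by
        simp only [if_true, Wrow_true, mul_ite, mul_one, mul_zero]
        have hc : ∀ k : ZMod n, (if j = k + b then β k else 0) = if k = j - b then β k else 0 :=
          fun k => if_congr (by rw [eq_sub_iff_add_eq, eq_comm]) rfl rfl
        rw [Finset.sum_congr rfl fun k _ => hc k, Finset.sum_ite_eq' Finset.univ (j - b) β]
        simp
      simp only [Matrix.smul_apply, smul_eq_mul] at h1 h2 ⊢
      rw [hx b j, h1, h2, add_comm]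
    rw [hx']
    apply Finset.centerMass_mem_convexHull
    · intro p _
      split <;> [exact hβ _; exact hα _]
    · rw [hw]; norm_num
    · intro p _
      exact Set.mem_range_self p

theorem combSet_zero : combSet n 0 = {0} := by
  ext x
  constructor
  · rintro ⟨α, β, hα, hβ, hs, hx⟩
    have hα0 : ∀ j, α j = 0 := by
      intro j
      have h1 : 0 ≤ ∑ j, α j := Finset.sum_nonneg fun j _ => hα j
      have h2 : 0 ≤ ∑ k, β k := Finset.sum_nonneg fun k _ => hβ k
      have h3 : ∑ j, α j = 0 := by linarith
      exact (Finset.sum_eq_zero_iff_of_nonneg fun j _ => hα j).1 h3 j (Finset.mem_univ j)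
    have hβ0 : ∀ k, β k = 0 := by
      intro k
      have h1 : 0 ≤ ∑ j, α j := Finset.sum_nonneg fun j _ => hα j
      have h2 : 0 ≤ ∑ k, β k := Finset.sum_nonneg fun k _ => hβ k
      have h3 : ∑ k, β k = 0 := by linarith
      exact (Finset.sum_eq_zero_iff_of_nonneg fun k _ => hβ k).1 h3 k (Finset.mem_univ k)
    funext b j
    simp [hx b j, hα0, hβ0]
  · rintro rfl
    exact ⟨0, 0, fun _ => le_refl 0, fun _ => le_refl 0, by simp, fun b j => by simp⟩

theorem smul_combSet {c : ℝ} (hc : 0 < c) : c • combSet n 1 = combSet n c := by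
  ext x
  rw [Set.mem_smul_set]
  constructor
  · rintro ⟨y, ⟨α, β, hα, hβ, hs, hy⟩, rfl⟩
    refine ⟨c • α, c • β, fun j => mul_nonneg hc.le (hα j), fun k => mul_nonneg hc.le (hβ k),
      ?_, fun b j => ?_⟩
    · simp only [Pi.smul_apply, smul_eq_mul, ← Finset.mul_sum]
      linear_combination c * hs
    · simp only [Matrix.smul_apply, Pi.smul_apply, smul_eq_mul, hy b j]
      ring
  · rintro ⟨α, β, hα, hβ, hs, hx⟩
    refine ⟨c⁻¹ • x, ⟨c⁻¹ • α, c⁻¹ • β, fun j => mul_nonneg (by positivity) (hα j),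
      fun k => mul_nonneg (by positivity) (hβ k), ?_, fun b j => ?_⟩, ?_⟩
    · simp only [Pi.smul_apply, smul_eq_mul, ← Finset.mul_sum]
      field_simp
      linarith [hs]
    · simp only [Matrix.smul_apply, Pi.smul_apply, smul_eq_mul, hx b j]
      ring
    · rw [smul_smul, mul_inv_cancel₀ hc.ne', one_smul]

theorem smul_Qpoly (m : ℕ) : (m : ℝ) • Qpoly n = combSet n m := by
  rcases Nat.eq_zero_or_pos m with rfl | hm
  · rw [Nat.cast_zero, combSet_zero]
    rw [Set.zero_smul_set]
    · rfl
    · exact ⟨Wrow n (false, 0), subset_convexHull ℝ _ (Set.mem_range_self _)⟩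
  · rw [Qpoly_eq, smul_combSet n (by exact_mod_cast hm)]

def pairMat (A B : ZMod n → ℕ) : Matrix (ZMod n) (ZMod n) ℝ :=
  Matrix.of fun b j => (A j : ℝ) + (B (j - b) : ℝ)

theorem cast_floor_of_int {r : ℝ} (hr : 0 ≤ r) (hz : ∃ z : ℤ, r = (z : ℝ)) :
    ((⌊r⌋₊ : ℝ)) = r := by
  obtain ⟨z, rfl⟩ := hz
  rw [natCast_floor_eq_intCast_floor hr, Int.floor_intCast]

theorem lattice_iff (m : ℕ) (x : Matrix (ZMod n) (ZMod n) ℝ) :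
    (x ∈ combSet n (m : ℝ) ∧ IsInt n x) ↔
      ∃ A B : ZMod n → ℕ, ((∑ j, A j) + ∑ k, B k = m) ∧ (∃ k, B k = 0) ∧ x = pairMat n A B := by
  constructor
  · rintro ⟨⟨α, β, hα, hβ, hs, hx⟩, hint⟩
    obtain ⟨k₀, -, hk₀⟩ := Finset.exists_min_image Finset.univ β ⟨0, Finset.mem_univ 0⟩
    set α' : ZMod n → ℝ := fun j => α j + β k₀ with hα'def
    set β' : ZMod n → ℝ := fun k => β k - β k₀ with hβ'def
    have hα'0 : ∀ j, 0 ≤ α' j := fun j => add_nonneg (hα j) (hβ k₀)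
    have hβ'0 : ∀ k, 0 ≤ β' k := fun k => sub_nonneg.2 (hk₀ k (Finset.mem_univ k))
    have hx' : ∀ b j, x b j = α' j + β' (j - b) := fun b j => by
      rw [hx b j]; simp only [hα'def, hβ'def]; ring
    have hβ'k₀ : β' k₀ = 0 := by simp [hβ'def]
    have hαint : ∀ j, ∃ z : ℤ, α' j = (z : ℝ) := by
      intro j
      obtain ⟨z, hz⟩ := hint (j - k₀) j
      refine ⟨z, ?_⟩
      rw [hx' (j - k₀) j] at hz
      simp only [sub_sub_cancel, hβ'k₀, add_zero] at hz
      exact hz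
    have hβint : ∀ k, ∃ z : ℤ, β' k = (z : ℝ) := by
      intro k
      obtain ⟨z₁, hz₁⟩ := hint (0 - k) 0
      obtain ⟨z₂, hz₂⟩ := hint (0 - k₀) 0
      refine ⟨z₁ - z₂, ?_⟩
      rw [hx' (0 - k) 0, sub_sub_cancel] at hz₁
      rw [hx' (0 - k₀) 0, sub_sub_cancel, hβ'k₀, add_zero] at hz₂
      push_cast
      linarith
    set A : ZMod n → ℕ := fun j => ⌊α' j⌋₊ with hAdef
    set B : ZMod n → ℕ := fun k => ⌊β' k⌋₊ with hBdef
    have hAcast : ∀ j, (A j : ℝ) = α' j := fun j => cast_floor_of_int (hα'0 j) (hαint j)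
    have hBcast : ∀ k, (B k : ℝ) = β' k := fun k => cast_floor_of_int (hβ'0 k) (hβint k)
    have hsum' : (∑ j, α' j) + ∑ k, β' k = (m : ℝ) := by
      simp only [hα'def, hβ'def, Finset.sum_add_distrib, Finset.sum_sub_distrib]
      linarith [hs]
    refine ⟨A, B, ?_, ⟨k₀, ?_⟩, ?_⟩
    · have : (((∑ j, A j) + ∑ k, B k : ℕ) : ℝ) = (m : ℝ) := by
        push_cast
        rw [Finset.sum_congr rfl fun j _ => hAcast j, Finset.sum_congr rfl fun k _ => hBcast k]
        exact hsum'
      exact_mod_cast this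
    · have : (B k₀ : ℝ) = 0 := by rw [hBcast k₀, hβ'k₀]
      exact_mod_cast this
    · funext b j
      show x b j = _
      rw [hx' b j, pairMat]
      simp only [Matrix.of_apply, hAcast, hBcast]
  · rintro ⟨A, B, hsum, ⟨k₀, hk₀⟩, rfl⟩
    refine ⟨⟨fun j => (A j : ℝ), fun k => (B k : ℝ), fun j => Nat.cast_nonneg _,
      fun k => Nat.cast_nonneg _, ?_, fun b j => rfl⟩, fun b j => ⟨A j + B (j - b), by
        push_cast [pairMat]; simp⟩⟩
    push_cast [← hsum]
    ring

theorem pairMat_inj {A B A' B' : ZMod n → ℕ} (h : pairMat n A B = pairMat n A' B')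
    (hB : ∃ k, B k = 0) (hB' : ∃ k, B' k = 0) : A = A' ∧ B = B' := by
  have key : ∀ j k, (A j : ℝ) + (B k : ℝ) = (A' j : ℝ) + (B' k : ℝ) := by
    intro j k
    have h2 := congrFun (congrFun h (j - k)) j
    simpa [pairMat, sub_sub_cancel] using h2
  obtain ⟨k₀, hk₀⟩ := hB
  obtain ⟨k₁, hk₁⟩ := hB'
  have hA : ∀ j, A j = A' j := by
    intro j
    have h1 := key j k₀
    have h2 := key j k₁
    rw [hk₀] at h1
    rw [hk₁] at h2
    have b1 : (0:ℝ) ≤ (B' k₀ : ℝ) := Nat.cast_nonneg _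
    have b2 : (0:ℝ) ≤ (B k₁ : ℝ) := Nat.cast_nonneg _
    have : (A j : ℝ) = (A' j : ℝ) := by push_cast at h1 h2 ⊢; linarith
    exact_mod_cast this
  refine ⟨funext hA, funext fun k => ?_⟩
  have h3 := key 0 k
  rw [hA 0] at h3
  have : (B k : ℝ) = (B' k : ℝ) := by linarith
  exact_mod_cast this

theorem mcard_sum {α β : Type*} (s : Finset β) (g : β → Multiset α) :
    Multiset.card (∑ a ∈ s, g a) = ∑ a ∈ s, Multiset.card (g a) :=
  map_sum ({ toFun := Multiset.card, map_zero' := rfl, map_add' := Multiset.card_add } : Multiset α →+ ℕ) g s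

def sumEquivSym (α : Type*) [Fintype α] [DecidableEq α] (m : ℕ) :
    {f : α → ℕ // ∑ a, f a = m} ≃ Sym α m where
  toFun f := ⟨∑ a, Multiset.replicate (f.1 a) a, by
    simp [mcard_sum, f.2]⟩
  invFun s := ⟨fun a => Multiset.count a s.1, by
    rw [show (∑ a, Multiset.count a s.1) = ∑ a ∈ s.1.toFinset, Multiset.count a s.1 from
      (Finset.sum_subset (Finset.subset_univ _) (by
        intro x _ hx
        simpa [Multiset.count_eq_zero] using fun h => hx (Multiset.mem_toFinset.2 h))).symm,
      Multiset.toFinset_sum_count_eq, s.2]⟩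
  left_inv f := by
    ext a
    simp [Multiset.count_sum', Multiset.count_replicate, Finset.sum_ite_eq]
  right_inv s := by
    ext1
    refine Multiset.ext.2 fun a => ?_
    simp [Multiset.count_sum', Multiset.count_replicate, Finset.sum_ite_eq]

def setAll (m : ℕ) : Set ((ZMod n → ℕ) × (ZMod n → ℕ)) :=
  {p | (∑ j, p.1 j) + (∑ j, p.2 j) = m}

def setZ (m : ℕ) : Set ((ZMod n → ℕ) × (ZMod n → ℕ)) :=
  {p | ((∑ j, p.1 j) + (∑ j, p.2 j) = m) ∧ ∃ k, p.2 k = 0}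

def setP (m : ℕ) : Set ((ZMod n → ℕ) × (ZMod n → ℕ)) :=
  {p | ((∑ j, p.1 j) + (∑ j, p.2 j) = m) ∧ ∀ k, p.2 k ≠ 0}

def prodEquivSum (m : ℕ) : ↥(setAll n m) ≃ {f : ZMod n ⊕ ZMod n → ℕ // ∑ a, f a = m} where
  toFun p := ⟨Sum.elim p.1.1 p.1.2, by rw [Fintype.sum_sum_type]; exact p.2⟩
  invFun f := ⟨((fun a => f.1 (Sum.inl a)), (fun a => f.1 (Sum.inr a))), by
    have := f.2
    rw [Fintype.sum_sum_type] at this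
    exact this⟩
  left_inv p := rfl
  right_inv f := by
    ext x
    cases x <;> rfl

instance instFinSetAll (m : ℕ) : Finite ↥(setAll n m) :=
  Finite.of_equiv _ ((sumEquivSym (ZMod n ⊕ ZMod n) m).symm.trans (prodEquivSum n m).symm)

theorem setAll_finite (m : ℕ) : (setAll n m).Finite := Set.finite_coe_iff.mp (instFinSetAll n m)

theorem ncard_setAll (m : ℕ) : (setAll n m).ncard = (2*n-1+m).choose (2*n-1) := by
  have h1 : (setAll n m).ncard = Nat.card (Sym (ZMod n ⊕ ZMod n) m) := by
    rw [← Nat.card_coe_set_eq]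
    exact Nat.card_congr ((prodEquivSum n m).trans (sumEquivSym (ZMod n ⊕ ZMod n) m))
  rw [h1, Nat.card_eq_fintype_card, Sym.card_sym_eq_choose, Fintype.card_sum, ZMod.card]
  have h2 := Nat.choose_symm (show m ≤ 2*n-1+m by omega)
  have h3 : 2*n-1+m-m = 2*n-1 := by omega
  rw [h3] at h2
  rw [show n+n+m-1 = 2*n-1+m from by have := Nat.pos_of_ne_zero (NeZero.ne n); omega, h2]

theorem ncard_split (m : ℕ) : (setZ n m).ncard + (setP n m).ncard = (setAll n m).ncard := by
  have hunion : setZ n m ∪ setP n m = setAll n m := by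
    ext p
    simp only [setZ, setP, setAll, Set.mem_union, Set.mem_setOf_eq]
    constructor
    · rintro (⟨h1, -⟩ | ⟨h1, -⟩) <;> exact h1
    · intro hp
      by_cases hz : ∃ k, p.2 k = 0
      · exact Or.inl ⟨hp, hz⟩
      · exact Or.inr ⟨hp, fun k hk => hz ⟨k, hk⟩⟩
  have hdisj : Disjoint (setZ n m) (setP n m) := by
    rw [Set.disjoint_left]
    rintro p ⟨-, k, hk⟩ ⟨-, hk'⟩
    exact hk' k hk
  rw [← Set.ncard_union_eq hdisj ((setAll_finite n m).subset (hunion ▸ Set.subset_union_left))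
    ((setAll_finite n m).subset (hunion ▸ Set.subset_union_right)), hunion]

theorem setP_eq_image (m : ℕ) (h : n ≤ m) :
    setP n m = (fun p : (ZMod n → ℕ) × (ZMod n → ℕ) => (p.1, fun k => p.2 k + 1)) ''
      setAll n (m - n) := by
  have hcard : ∑ _k : ZMod n, 1 = n := by simp [ZMod.card]
  ext p
  constructor
  · rintro ⟨hsum, hnz⟩
    refine ⟨(p.1, fun k => p.2 k - 1), ?_, ?_⟩
    · have hone : ∀ k, 1 ≤ p.2 k := fun k => Nat.one_le_iff_ne_zero.2 (hnz k)
      have hsub : ∑ k, (p.2 k - 1) = (∑ k, p.2 k) - n := by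
        rw [Finset.sum_tsub_distrib Finset.univ fun k _ => hone k, hcard]
      have hge : n ≤ ∑ k, p.2 k := by
        calc n = ∑ _k : ZMod n, 1 := hcard.symm
        _ ≤ ∑ k, p.2 k := Finset.sum_le_sum fun k _ => hone k
      show (∑ j, p.1 j) + ∑ k, (p.2 k - 1) = m - n
      omega
    · ext k
      · rfl
      · have := Nat.one_le_iff_ne_zero.2 (hnz k)
        show p.2 k - 1 + 1 = p.2 k
        omega
  · rintro ⟨q, hq, rfl⟩
    refine ⟨?_, fun k => by simp⟩
    show (∑ j, q.1 j) + ∑ k, (q.2 k + 1) = m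
    rw [Finset.sum_add_distrib, hcard]
    have := hq
    simp only [setAll, Set.mem_setOf_eq] at this
    omega

theorem ncard_setP_of_le (m : ℕ) (h : n ≤ m) : (setP n m).ncard = (setAll n (m-n)).ncard := by
  rw [setP_eq_image n m h]
  apply Set.ncard_image_of_injOn
  rintro p - q - hpq
  have h1 := congrArg Prod.fst hpq
  have h2 := congrArg Prod.snd hpq
  ext x
  · exact congrFun h1 x
  · have := congrFun h2 x
    simpa using this

theorem setP_empty (m : ℕ) (h : m < n) : setP n m = ∅ := by
  ext p
  simp only [Set.mem_empty_iff_false, iff_false, setP, Set.mem_setOf_eq, not_and]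
  intro hsum hnz
  have hcard : ∑ _k : ZMod n, 1 = n := by simp [ZMod.card]
  have hge : n ≤ ∑ k, p.2 k := by
    calc n = ∑ _k : ZMod n, 1 := hcard.symm
    _ ≤ ∑ k, p.2 k := Finset.sum_le_sum fun k _ => Nat.one_le_iff_ne_zero.2 (hnz k)
  omega

theorem hcount (m : ℕ) :
    ({x | x ∈ (m : ℝ) • Qpoly n ∧ IsInt n x}.ncard : ℝ)
      + (if n ≤ m then (((2*n-1 + (m-n)).choose (2*n-1) : ℕ) : ℝ) else 0)
    = (((2*n-1+m).choose (2*n-1) : ℕ) : ℝ) := by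
  have hset : {x | x ∈ (m : ℝ) • Qpoly n ∧ IsInt n x}
      = (fun p : (ZMod n → ℕ) × (ZMod n → ℕ) => pairMat n p.1 p.2) '' setZ n m := by
    ext x
    rw [Set.mem_setOf_eq, smul_Qpoly n m, lattice_iff n m x]
    constructor
    · rintro ⟨A, B, hsum, hz, rfl⟩
      exact ⟨(A, B), ⟨hsum, hz⟩, rfl⟩
    · rintro ⟨⟨A, B⟩, ⟨hsum, hz⟩, rfl⟩
      exact ⟨A, B, hsum, hz, rfl⟩
  have hinj : Set.InjOn (fun p : (ZMod n → ℕ) × (ZMod n → ℕ) => pairMat n p.1 p.2) (setZ n m) := by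
    rintro ⟨A, B⟩ hAB ⟨A', B'⟩ hAB' h
    obtain ⟨h1, h2⟩ := pairMat_inj n h hAB.2 hAB'.2
    simp only [Prod.mk.injEq]
    exact ⟨h1, h2⟩
  have hzz : {x | x ∈ (m : ℝ) • Qpoly n ∧ IsInt n x}.ncard = (setZ n m).ncard := by
    rw [hset, Set.ncard_image_of_injOn hinj]
  rw [hzz]
  have hsplit := ncard_split n m
  rw [ncard_setAll] at hsplit
  by_cases h : n ≤ m
  · rw [if_pos h]
    have hp := ncard_setP_of_le n m h
    rw [ncard_setAll] at hp
    have hfin : (setZ n m).ncard + (2*n-1+(m-n)).choose (2*n-1) = (2*n-1+m).choose (2*n-1) := by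
      rw [← hp]; exact hsplit
    exact_mod_cast hfin
  · rw [if_neg h, add_zero]
    have hp : (setP n m).ncard = 0 := by rw [setP_empty n m (by omega)]; simp
    have hres : (setZ n m).ncard = (2*n-1+m).choose (2*n-1) := by omega
    exact_mod_cast hres

theorem final_alg (n : ℕ) (hn : 3 ≤ n) (L : ℕ → ℝ)
    (hcount : ∀ m : ℕ, L m + (if n ≤ m then (((2*n-1 + (m-n)).choose (2*n-1) : ℝ)) else 0)
      = ((2*n-1+m).choose (2*n-1) : ℝ)) :
    (PowerSeries.mk L) * (1 - PowerSeries.X) ^ (2 * n - 1)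
      = ∑ i ∈ Finset.range n, PowerSeries.X ^ i := by
  have hn0 : 0 < n := by omega
  set C : PowerSeries ℝ := PowerSeries.mk fun m => ((2*n-1 + m).choose (2*n-1) : ℝ) with hC
  have hL : PowerSeries.mk L = C - PowerSeries.X ^ n * C := by
    ext m
    simp only [map_sub, PowerSeries.coeff_mk, PowerSeries.coeff_X_pow_mul', hC]
    have := hcount m
    split_ifs with h
    · rw [if_pos h] at this; linarith
    · rw [if_neg h] at this; linarith
  have hCinvN : C * (1 - PowerSeries.X) ^ (2*n-1+1) = 1 := by
    simpa using PowerSeries.mk_add_choose_mul_one_sub_pow_eq_one ℝ (2*n-1)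
  have hX : (1 - PowerSeries.X : PowerSeries ℝ) ≠ 0 := fun h => by
    have := congrArg (PowerSeries.constantCoeff (R := ℝ)) h
    simp at this
  apply mul_right_cancel₀ hX
  have key : (∑ i ∈ Finset.range n, (PowerSeries.X:PowerSeries ℝ) ^ i) * (1 - PowerSeries.X)
      = 1 - PowerSeries.X ^ n := by
    have := geom_sum_mul (PowerSeries.X : PowerSeries ℝ) n
    have h2 : (∑ i ∈ Finset.range n, (PowerSeries.X:PowerSeries ℝ) ^ i) * (1 - PowerSeries.X)
        = -((∑ i ∈ Finset.range n, (PowerSeries.X:PowerSeries ℝ) ^ i) * (PowerSeries.X - 1)) := by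
      ring
    rw [h2, this]; ring
  calc PowerSeries.mk L * (1 - PowerSeries.X) ^ (2*n-1) * (1 - PowerSeries.X)
      = (C - PowerSeries.X ^ n * C) * (1 - PowerSeries.X) ^ (2*n-1+1) := by
        rw [hL, mul_assoc, pow_succ]
    _ = C * (1 - PowerSeries.X) ^ (2*n-1+1)
        - PowerSeries.X ^ n * (C * (1 - PowerSeries.X) ^ (2*n-1+1)) := by ring
    _ = 1 - PowerSeries.X ^ n * 1 := by rw [hCinvN]
    _ = (∑ i ∈ Finset.range n, (PowerSeries.X:PowerSeries ℝ) ^ i) * (1 - PowerSeries.X) := by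
        rw [key, mul_one]


/-- the Ehrhart series of `Q_n` is `(1 + t + ⋯ + t^{n-1})/(1-t)^{2n-1}`,
i.e. the `h*`-vector of `Q_n` is `(1,1,…,1)` with exactly `n` ones. -/
theorem Q_hstar_vector (n : ℕ) [NeZero n] (hn : 3 ≤ n) :
    (PowerSeries.mk fun m : ℕ =>
        (({x | x ∈ (m : ℝ) • Qpoly n ∧ IsInt n x}.ncard : ℝ)))
      * (1 - PowerSeries.X) ^ (2 * n - 1)
    = ∑ i ∈ Finset.range n, PowerSeries.X ^ i :=
  final_alg n hn _ (hcount n)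
end

section
/- For n even, the h*-vector of DP_n equals (1, 2, 3, ..., n/2−1, n/2, n/2−1, ..., 2, 1); equivalently its h*-polynomial is (1 + t + ... + t^{n/2−1})², the square of the h*-polynomial of Q_{n/2}. -/
open Matrix Finset Pointwise

variable (n : ℕ) [NeZero n]

open PowerSeries

set_option linter.unusedSectionVars false
set_option maxHeartbeats 1000000


noncomputable def ser {α : Type} (w : α → ℕ) : PowerSeries ℝ :=
  PowerSeries.mk fun k => (Nat.card {a : α // w a = k} : ℝ)

theorem nat_card_sigma {ι : Type} [Fintype ι] (F : ι → Type) [∀ i, Finite (F i)] :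
    Nat.card (Σ i, F i) = ∑ i, Nat.card (F i) := by
  haveI : ∀ i, Fintype (F i) := fun i => Fintype.ofFinite _
  simp [Nat.card_eq_fintype_card, Fintype.card_sigma]

def convEquiv {α β : Type} (w1 : α → ℕ) (w2 : β → ℕ) (k : ℕ) :
    {p : α × β // w1 p.1 + w2 p.2 = k} ≃
      Σ i : Fin (k+1), ({a : α // w1 a = i.val} × {b : β // w2 b = k - i.val}) where
  toFun p := ⟨⟨w1 p.1.1, by have := p.2; omega⟩, ⟨p.1.1, rfl⟩,
    ⟨p.1.2, by show w2 p.1.2 = k - w1 p.1.1; have := p.2; omega⟩⟩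
  invFun := fun ⟨i, ⟨a, ha⟩, ⟨b, hb⟩⟩ => ⟨(a, b), by
    show w1 a + w2 b = k; have h3 := i.isLt; omega⟩
  left_inv := by rintro ⟨⟨a, b⟩, h⟩; rfl
  right_inv := by
    rintro ⟨⟨iv, hlt⟩, ⟨a, ha⟩, ⟨b, hb⟩⟩
    simp only [Fin.val_mk] at ha hb
    subst ha
    rfl

theorem ser_mul {α β : Type} (w1 : α → ℕ) (w2 : β → ℕ)
    (h1 : ∀ i, Finite {a : α // w1 a = i}) (h2 : ∀ j, Finite {b : β // w2 b = j}) :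
    ser (fun p : α × β => w1 p.1 + w2 p.2) = ser w1 * ser w2 := by
  ext k
  rw [PowerSeries.coeff_mul]
  simp only [ser, PowerSeries.coeff_mk]
  rw [Finset.Nat.sum_antidiagonal_eq_sum_range_succ_mk]
  rw [Nat.card_congr (convEquiv w1 w2 k), nat_card_sigma]
  push_cast [Nat.card_prod]
  rw [← Fin.sum_univ_eq_sum_range (fun i => (Nat.card {a : α // w1 a = i} : ℝ) *
      (Nat.card {b : β // w2 b = k - i} : ℝ))]

theorem ser_congr {α β : Type} (e : α ≃ β) (w1 : α → ℕ) (w2 : β → ℕ)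
    (h : ∀ a, w2 (e a) = w1 a) : ser w1 = ser w2 := by
  ext k
  simp only [ser, PowerSeries.coeff_mk]
  have : Nat.card {a : α // w1 a = k} = Nat.card {b : β // w2 b = k} :=
    Nat.card_congr (e.subtypeEquiv (q := fun b => w2 b = k) fun a => by show w1 a = k ↔ w2 (e a) = k; rw [h a])
  rw [this]

theorem finite_fiber_sum (μ v : ℕ) : Finite {c : Fin μ → ℕ // ∑ i, c i = v} := by
  apply Finite.of_injective (fun c => (fun i => (⟨c.1 i, by
    have : c.1 i ≤ ∑ j, c.1 j := Finset.single_le_sum (fun j _ => Nat.zero_le _) (Finset.mem_univ i)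
    omega⟩ : Fin (v+1))))
  intro c d h
  ext i
  have := congrFun h i
  simpa [Fin.mk.injEq] using this

theorem finite_conv {α β : Type} (w1 : α → ℕ) (w2 : β → ℕ)
    (h1 : ∀ i, Finite {a : α // w1 a = i}) (h2 : ∀ j, Finite {b : β // w2 b = j}) (k : ℕ) :
    Finite {p : α × β // w1 p.1 + w2 p.2 = k} :=
  Finite.of_equiv _ (convEquiv w1 w2 k).symm

noncomputable def Cser (μ : ℕ) : PowerSeries ℝ := ser (fun c : Fin μ → ℕ => ∑ i, c i)

theorem finite_eq_fiber (i : ℕ) : Finite {a : ℕ // a = i} := by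
  haveI : Subsingleton {a : ℕ // a = i} := ⟨fun a b => Subtype.ext (a.2.trans b.2.symm)⟩
  exact Finite.of_subsingleton

theorem ser_id : ser (fun e : ℕ => e) = PowerSeries.mk 1 := by
  ext k
  simp only [ser, PowerSeries.coeff_mk, Pi.one_apply]
  haveI : Unique {e : ℕ // e = k} := ⟨⟨⟨k, rfl⟩⟩, fun a => Subtype.ext a.2⟩
  rw [Nat.card_unique]
  norm_num

theorem Cser_mul (μ : ℕ) : Cser μ * (1 - X)^μ = 1 := by
  induction μ with
  | zero =>
    rw [pow_zero, mul_one]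
    ext k
    simp only [Cser, ser, PowerSeries.coeff_mk]
    rcases Nat.eq_zero_or_pos k with rfl | hk
    · haveI : Unique {c : Fin 0 → ℕ // ∑ i, c i = 0} :=
        ⟨⟨⟨Fin.elim0, by simp⟩⟩, fun a => Subtype.ext (funext fun i => i.elim0)⟩
      rw [Nat.card_unique, PowerSeries.coeff_one]
      simp
    · haveI : IsEmpty {c : Fin 0 → ℕ // ∑ i, c i = k} :=
        ⟨fun c => by have := c.2; simp at this; omega⟩
      rw [Nat.card_of_isEmpty, PowerSeries.coeff_one, if_neg (by omega)]
      simp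
  | succ μ ih =>
    have hcongr := ser_congr (Fin.consEquiv (fun _ : Fin (μ+1) => ℕ))
      (fun p : ℕ × (Fin μ → ℕ) => p.1 + ∑ i, p.2 i)
      (fun c : Fin (μ+1) → ℕ => ∑ i, c i)
      (fun p => by simp [Fin.consEquiv, Fin.sum_univ_succ])
    have hmul : ser (fun p : ℕ × (Fin μ → ℕ) => p.1 + ∑ i, p.2 i)
        = ser (fun e : ℕ => e) * Cser μ :=
      ser_mul (fun e : ℕ => e) (fun c : Fin μ → ℕ => ∑ i, c i) finite_eq_fiber
        (finite_fiber_sum μ)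
    rw [Cser, ← hcongr, hmul, ser_id, pow_succ]
    calc PowerSeries.mk 1 * Cser μ * ((1-X)^μ * (1-X))
        = (PowerSeries.mk 1 * (1 - X)) * (Cser μ * (1-X)^μ) := by ring
      _ = 1 := by rw [PowerSeries.mk_one_mul_one_sub_eq_one, ih, mul_one]

theorem finite_mul_fiber (m : ℕ) (hm : 0 < m) (i : ℕ) : Finite {e : ℕ // m * e = i} := by
  apply Finite.of_injective (fun e => (⟨e.1, by
    have h2 := e.2
    have h3 : e.1 ≤ m * e.1 := Nat.le_mul_of_pos_left _ hm
    omega⟩ : Fin (i+1)))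
  intro a b h
  exact Subtype.ext (by simpa [Fin.mk.injEq] using h)

theorem ser_mul_weight (m : ℕ) (hm : 0 < m) :
    ser (fun e : ℕ => m * e) = PowerSeries.mk (fun k => if m ∣ k then (1:ℝ) else 0) := by
  ext k
  simp only [ser, PowerSeries.coeff_mk]
  by_cases h : m ∣ k
  · obtain ⟨c, rfl⟩ := h
    haveI : Unique {e : ℕ // m * e = m * c} :=
      ⟨⟨⟨c, rfl⟩⟩, fun a => Subtype.ext (Nat.eq_of_mul_eq_mul_left hm a.2)⟩
    rw [Nat.card_unique, if_pos ⟨c, rfl⟩]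
    norm_num
  · haveI : IsEmpty {e : ℕ // m * e = k} := ⟨fun e => h ⟨e.1, e.2.symm⟩⟩
    rw [Nat.card_of_isEmpty, if_neg h]
    norm_num

theorem Eser_mul (m : ℕ) (hm : 0 < m) :
    ser (fun e : ℕ => m * e) * (1 - X^m) = 1 := by
  rw [ser_mul_weight m hm]
  ext k
  rw [mul_sub, mul_one, map_sub, PowerSeries.coeff_mul_X_pow', PowerSeries.coeff_mk,
    PowerSeries.coeff_one]
  by_cases h0 : k = 0
  · subst h0
    rw [if_pos (dvd_zero m), if_neg (by omega), if_pos rfl]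
    norm_num
  · rw [if_neg h0]
    by_cases hd : m ∣ k
    · have hle : m ≤ k := Nat.le_of_dvd (by omega) hd
      rw [if_pos hd, if_pos hle, PowerSeries.coeff_mk,
        if_pos ((Nat.dvd_sub hd dvd_rfl))]
      norm_num
    · rw [if_neg hd]
      by_cases hle : m ≤ k
      · rw [if_pos hle, PowerSeries.coeff_mk, if_neg (fun hc => hd (by
          obtain ⟨c, hc⟩ := hc
          exact ⟨c + 1, by have hh : m*(c+1) = m*c + m := by ring
                           omega⟩))]
        norm_num
      · rw [if_neg hle]
        norm_num

-- positive part shift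
theorem card_pos_part (μ v : ℕ) (hμ : 0 < μ) :
    Nat.card {c : Fin μ → ℕ // (¬∃ i, c i = 0) ∧ ∑ i, c i = v}
      = if μ ≤ v then Nat.card {c : Fin μ → ℕ // ∑ i, c i = v - μ} else 0 := by
  have hone : ∀ (c : Fin μ → ℕ), (¬∃ i, c i = 0) → ∀ i, 1 ≤ c i := by
    intro c hc i
    rcases Nat.eq_zero_or_pos (c i) with h | h
    · exact absurd ⟨i, h⟩ hc
    · exact h
  by_cases h : μ ≤ v
  · rw [if_pos h]
    apply Nat.card_congr
    refine ⟨fun c => ⟨fun i => c.1 i - 1, ?_⟩, fun c => ⟨fun i => c.1 i + 1, ?_, ?_⟩, ?_, ?_⟩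
    · have h1 := hone c.1 c.2.1
      show ∑ i, (c.1 i - 1) = v - μ
      have hsum : ∑ i, (c.1 i - 1) + μ = v := by
        have h2 : ∑ i, ((c.1 i - 1) + 1) = ∑ i, c.1 i := by
          refine Finset.sum_congr rfl fun i _ => ?_
          have := h1 i; omega
        rw [Finset.sum_add_distrib, Finset.sum_const, Finset.card_univ,
          Fintype.card_fin, smul_eq_mul, mul_one, c.2.2] at h2
        omega
      omega
    · intro hex
      obtain ⟨i, hi⟩ := hex
      simp at hi
    · show ∑ i, (c.1 i + 1) = v
      rw [Finset.sum_add_distrib, Finset.sum_const, Finset.card_univ, Fintype.card_fin,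
        smul_eq_mul, mul_one, c.2]
      omega
    · intro c
      ext i
      have := hone c.1 c.2.1 i
      simp
      omega
    · intro c
      ext i
      simp
  · rw [if_neg h]
    haveI : IsEmpty {c : Fin μ → ℕ // (¬∃ i, c i = 0) ∧ ∑ i, c i = v} := by
      refine ⟨fun c => ?_⟩
      have h1 := hone c.1 c.2.1
      have : ∑ i, (1:ℕ) ≤ ∑ i, c.1 i := Finset.sum_le_sum (fun i _ => h1 i)
      simp at this
      have := c.2.2
      omega
    exact Nat.card_of_isEmpty

def Vmt (m : ℕ) : Type := {c : Fin m → ℕ // ∃ i, c i = 0}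

def wV {m : ℕ} (c : Vmt m) : ℕ := ∑ i, c.1 i

noncomputable def Fser (m : ℕ) : PowerSeries ℝ := ser (fun c : Vmt m => wV c)

theorem finite_Vmt_fiber (m v : ℕ) : Finite {a : Vmt m // wV a = v} := by
  haveI := finite_fiber_sum m v
  apply Finite.of_injective (fun a => (⟨a.1.1, a.2⟩ : {c : Fin m → ℕ // ∑ i, c i = v}))
  intro a b h
  exact Subtype.ext (Subtype.ext (by simpa using congrArg Subtype.val h))

theorem card_split (μ v : ℕ) :
    Nat.card {c : Fin μ → ℕ // ∑ i, c i = v}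
      = Nat.card {a : Vmt μ // wV a = v}
        + Nat.card {c : Fin μ → ℕ // (¬∃ i, c i = 0) ∧ ∑ i, c i = v} := by
  haveI := finite_fiber_sum μ v
  classical
  have e1 : {c : Fin μ → ℕ // ∑ i, c i = v} ≃
      {x : {c : Fin μ → ℕ // ∑ i, c i = v} // ∃ i, x.1 i = 0} ⊕
      {x : {c : Fin μ → ℕ // ∑ i, c i = v} // ¬∃ i, x.1 i = 0} :=
    (Equiv.sumCompl _).symm
  rw [Nat.card_congr e1, Nat.card_sum]
  congr 1
  · show _ = Nat.card {x : {c : Fin μ → ℕ // ∃ i, c i = 0} // ∑ i, x.1 i = v}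
    apply Nat.card_congr
    calc {x : {c : Fin μ → ℕ // ∑ i, c i = v} // ∃ i, x.1 i = 0}
        ≃ {c : Fin μ → ℕ // (∑ i, c i = v) ∧ ∃ i, c i = 0} :=
          Equiv.subtypeSubtypeEquivSubtypeInter
            (p := fun c : Fin μ → ℕ => ∑ i, c i = v) (q := fun c => ∃ i, c i = 0)
      _ ≃ {c : Fin μ → ℕ // (∃ i, c i = 0) ∧ ∑ i, c i = v} :=
          Equiv.subtypeEquivRight (fun c => and_comm)
      _ ≃ {x : {c : Fin μ → ℕ // ∃ i, c i = 0} // ∑ i, x.1 i = v} :=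
          (Equiv.subtypeSubtypeEquivSubtypeInter
            (p := fun c : Fin μ → ℕ => ∃ i, c i = 0) (q := fun c => ∑ i, c i = v)).symm
  · apply Nat.card_congr
    calc {x : {c : Fin μ → ℕ // ∑ i, c i = v} // ¬∃ i, x.1 i = 0}
        ≃ {c : Fin μ → ℕ // (∑ i, c i = v) ∧ ¬∃ i, c i = 0} :=
          Equiv.subtypeSubtypeEquivSubtypeInter
            (p := fun c : Fin μ → ℕ => ∑ i, c i = v) (q := fun c => ¬∃ i, c i = 0)
      _ ≃ {c : Fin μ → ℕ // (¬∃ i, c i = 0) ∧ ∑ i, c i = v} :=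
          Equiv.subtypeEquivRight (fun c => and_comm)

theorem Fser_eq (μ : ℕ) (hμ : 0 < μ) : Fser μ = (1 - X^μ) * Cser μ := by
  ext v
  rw [sub_mul, one_mul, mul_comm, map_sub, PowerSeries.coeff_mul_X_pow']
  simp only [Fser, Cser, ser, PowerSeries.coeff_mk]
  have hs := card_split μ v
  have hp := card_pos_part μ v hμ
  by_cases h : μ ≤ v
  · rw [if_pos h]
    rw [hp, if_pos h] at hs
    push_cast [hs]
    ring
  · rw [if_neg h]
    rw [hp, if_neg h] at hs
    push_cast [hs]
    ring

theorem Fser_mul (μ : ℕ) (hμ : 0 < μ) : Fser μ * (1 - X)^μ = 1 - X^μ := by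
  rw [Fser_eq μ hμ, mul_assoc, Cser_mul, mul_one]

abbrev Blk (m : ℕ) : Type := (Vmt m × Vmt m) × ℕ
abbrev Tup (m : ℕ) : Type := Blk m × Blk m

def wB (m : ℕ) : Blk m → ℕ := fun b => (wV b.1.1 + wV b.1.2) + m * b.2
def wT (m : ℕ) : Tup m → ℕ := fun t => wB m t.1 + wB m t.2

theorem finite_wB_fiber (m : ℕ) (hm : 0 < m) (i : ℕ) : Finite {b : Blk m // wB m b = i} :=
  finite_conv (fun q : Vmt m × Vmt m => wV q.1 + wV q.2) (fun e : ℕ => m * e)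
    (finite_conv _ _ (finite_Vmt_fiber m) (finite_Vmt_fiber m))
    (finite_mul_fiber m hm) i

theorem ser_wT (m : ℕ) (hm : 0 < m) :
    ser (wT m) = ((Fser m)^2 * ser (fun e : ℕ => m * e))^2 := by
  have h12 : ser (fun q : Vmt m × Vmt m => wV q.1 + wV q.2) = Fser m * Fser m :=
    ser_mul _ _ (finite_Vmt_fiber m) (finite_Vmt_fiber m)
  have h2 : ser (wB m) = ser (fun q : Vmt m × Vmt m => wV q.1 + wV q.2)
      * ser (fun e : ℕ => m * e) :=
    ser_mul (fun q : Vmt m × Vmt m => wV q.1 + wV q.2) (fun e : ℕ => m * e)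
      (finite_conv _ _ (finite_Vmt_fiber m) (finite_Vmt_fiber m)) (finite_mul_fiber m hm)
  have h1 : ser (wT m) = ser (wB m) * ser (wB m) :=
    ser_mul (wB m) (wB m) (finite_wB_fiber m hm) (finite_wB_fiber m hm)
  rw [h1, h2, h12]
  ring

theorem main_series (m : ℕ) (hm : 2 ≤ m) :
    ser (wT m) * (1 - X : PowerSeries ℝ)^(2*(2*m) - 2)
      = (∑ i ∈ Finset.range m, (X : PowerSeries ℝ)^i)^2 := by
  have hm0 : 0 < m := by omega
  have hg : (∑ i ∈ Finset.range m, (X:PowerSeries ℝ)^i) * (1 - X) = 1 - X^m := by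
    have h := geom_sum_mul (X : PowerSeries ℝ) m
    linear_combination -h
  have hF := Fser_mul m hm0
  have hE := Eser_mul m hm0
  have h4 : ser (wT m) * (1-X)^(4*m) = (1 - X^m)^2 := by
    rw [ser_wT m hm0, show (4*m) = m*4 by ring, pow_mul]
    calc ((Fser m)^2 * ser (fun e : ℕ => m * e))^2 * ((1-X)^m)^4
        = ((Fser m * (1-X)^m)^2 * ser (fun e : ℕ => m * e))^2 := by ring
      _ = ((1 - X^m)^2 * ser (fun e : ℕ => m * e))^2 := by rw [hF]
      _ = (1-X^m)^2 * (ser (fun e : ℕ => m * e) * (1-X^m))^2 := by ring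
      _ = (1-X^m)^2 := by rw [hE, one_pow, mul_one]
  have hne : ((1:PowerSeries ℝ) - X)^2 ≠ 0 :=
    pow_ne_zero _ (fun h => by simpa using congrArg (PowerSeries.constantCoeff) h)
  apply mul_right_cancel₀ hne
  rw [mul_assoc, ← pow_add, show 2*(2*m) - 2 + 2 = 4*m by omega, h4, ← mul_pow, hg]

-- translations and reflections
def tr (c : ZMod n) : Equiv.Perm (ZMod n) := Equiv.addRight c
def re (c : ZMod n) : Equiv.Perm (ZMod n) := (Equiv.neg (ZMod n)).trans (Equiv.addRight c)

@[simp] lemma tr_apply (c x : ZMod n) : tr n c x = x + c := rfl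
@[simp] lemma re_apply (c x : ZMod n) : re n c x = -x + c := rfl

lemma tr_mul_tr (a b : ZMod n) : tr n a * tr n b = tr n (b + a) := by
  ext x; simp [Equiv.Perm.mul_apply, add_assoc]

lemma tr_mul_re (a b : ZMod n) : tr n a * re n b = re n (b + a) := by
  ext x; simp [Equiv.Perm.mul_apply, add_assoc]

lemma re_mul_tr (a b : ZMod n) : re n a * tr n b = re n (a - b) := by
  ext x; simp [Equiv.Perm.mul_apply]; ring

lemma re_mul_re (a b : ZMod n) : re n a * re n b = tr n (a - b) := by
  ext x; simp [Equiv.Perm.mul_apply]; ring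

lemma tr_zero : tr n 0 = 1 := by ext x; simp

lemma rot_pow (j : ℕ) : (rot n)^j = tr n (j : ZMod n) := by
  induction j with
  | zero => simp [tr_zero]
  | succ j ih =>
    rw [pow_succ, ih]
    show tr n (j : ZMod n) * rot n = _
    have : rot n = tr n 1 := rfl
    rw [this, tr_mul_tr]
    push_cast
    ring_nf

lemma rot_mem : rot n ∈ dihedral n :=
  Subgroup.subset_closure (Set.mem_insert _ _)

lemma rfl'_mem : rfl' n ∈ dihedral n :=
  Subgroup.subset_closure (Set.mem_insert_iff.2 (Or.inr rfl))

lemma tr_mem (c : ZMod n) : tr n c ∈ dihedral n := by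
  have h : tr n c = (rot n)^(c.val) := by
    rw [rot_pow]
    congr 1
    exact (ZMod.natCast_rightInverse c).symm
  rw [h]
  exact pow_mem (rot_mem n) _

lemma re_mem (c : ZMod n) : re n c ∈ dihedral n := by
  have h : re n c = tr n c * rfl' n := by
    ext x
    simp [Equiv.Perm.mul_apply, rfl']
  rw [h]
  exact mul_mem (tr_mem n c) (rfl'_mem n)

lemma dihedral_class {σ : Equiv.Perm (ZMod n)} (hσ : σ ∈ dihedral n) :
    (∃ c, σ = tr n c) ∨ (∃ c, σ = re n c) := by
  refine Subgroup.closure_induction ?_ ?_ ?_ ?_ hσ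
  · rintro x (rfl | rfl)
    · exact Or.inl ⟨1, rfl⟩
    · refine Or.inr ⟨0, ?_⟩
      ext x; simp [rfl']
  · exact Or.inl ⟨0, (tr_zero n).symm⟩
  · rintro x y _ _ (⟨a, rfl⟩ | ⟨a, rfl⟩) (⟨b, rfl⟩ | ⟨b, rfl⟩)
    · exact Or.inl ⟨b + a, tr_mul_tr n a b⟩
    · exact Or.inr ⟨b + a, tr_mul_re n a b⟩
    · exact Or.inr ⟨a - b, re_mul_tr n a b⟩
    · exact Or.inl ⟨a - b, re_mul_re n a b⟩
  · rintro x _ (⟨a, rfl⟩ | ⟨a, rfl⟩)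
    · refine Or.inl ⟨-a, inv_eq_of_mul_eq_one_right ?_⟩
      rw [tr_mul_tr, neg_add_cancel, tr_zero]
    · refine Or.inr ⟨a, inv_eq_of_mul_eq_one_right ?_⟩
      rw [re_mul_re, sub_self, tr_zero]

lemma permMat_tr (c i j : ZMod n) : permMat n (tr n c) i j = if i = j + c then 1 else 0 := rfl

lemma permMat_re (c i j : ZMod n) : permMat n (re n c) i j = if i = -j + c then 1 else 0 := rfl

section Even
set_option linter.unusedSectionVars false

variable (m : ℕ) [NeZero (2*m)]

lemma hm_pos : 0 < m := by
  have := NeZero.ne (2*m); omega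

lemma val_two_mul_zmod (z : ZMod (2*m)) : (2*z).val = (2 * z.val) % (2*m) := by
  calc (2*z).val = (z+z).val := congrArg ZMod.val (two_mul z)
    _ = (z.val + z.val) % (2*m) := ZMod.val_add z z
    _ = (2 * z.val) % (2*m) := by ring_nf

lemma zmod_eq_of_val_eq {z w : ZMod (2*m)} (h : z.val = w.val) : z = w := by
  have hz := ZMod.natCast_rightInverse (n := 2*m) z
  have hw := ZMod.natCast_rightInverse (n := 2*m) w
  rw [← hz, ← hw, h]

lemma two_torsion (z : ZMod (2*m)) : 2*z = 0 ↔ z = 0 ∨ z = (m : ZMod (2*m)) := by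
  have hm0 := hm_pos m
  have hzv := ZMod.val_lt z
  constructor
  · intro h
    have h1 : (2*z).val = 0 := by rw [h, ZMod.val_zero]
    rw [val_two_mul_zmod] at h1
    have hdvd : (2*m) ∣ 2*z.val := Nat.dvd_of_mod_eq_zero h1
    obtain ⟨c, hc⟩ := hdvd
    have : z.val = 0 ∨ z.val = m := by
      rcases c with _ | _ | c
      · left; omega
      · right; omega
      · exfalso
        have : 2*m*(c+1+1) = 2*m*c + 4*m := by ring
        omega
    rcases this with h2 | h2
    · left
      apply zmod_eq_of_val_eq
      rw [h2, ZMod.val_zero]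
    · right
      apply zmod_eq_of_val_eq
      rw [h2, ZMod.val_cast_of_lt (by omega : m < 2*m)]
  · rintro (rfl | rfl)
    · ring
    · have : (2 : ZMod (2*m)) * m = ((2*m : ℕ) : ZMod (2*m)) := by push_cast; ring
      rw [this, ZMod.natCast_self]

lemma mhat_ne_zero : (m : ZMod (2*m)) ≠ 0 := by
  have hm0 := hm_pos m
  intro h
  have := congrArg ZMod.val h
  rw [ZMod.val_cast_of_lt (by omega : m < 2*m), ZMod.val_zero] at this
  omega

lemma val_one_zmod : (1 : ZMod (2*m)).val = 1 := by
  have hm0 := hm_pos m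
  rw [ZMod.val_one_eq_one_mod]
  exact Nat.mod_eq_of_lt (by omega)

lemma sum_ite_two_mul (c : ZMod (2*m)) :
    ∑ i : ZMod (2*m), (if 2*i = c then (1:ℝ) else 0) = if 2 ∣ c.val then 2 else 0 := by
  classical
  have hm0 := hm_pos m
  rw [Finset.sum_boole]
  by_cases h2 : 2 ∣ c.val
  · rw [if_pos h2]
    have h2t : 2*((c.val/2 : ℕ) : ZMod (2*m)) = c := by
      have e : ((2*(c.val/2) : ℕ) : ZMod (2*m)) = c := by
        rw [Nat.mul_div_cancel' h2]
        exact ZMod.natCast_rightInverse c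
      push_cast at e
      exact e
    set t : ZMod (2*m) := ((c.val/2 : ℕ) : ZMod (2*m)) with ht
    have hfil : Finset.univ.filter (fun i : ZMod (2*m) => 2*i = c) = {t, t + m} := by
      ext i
      simp only [Finset.mem_filter, Finset.mem_univ, true_and, Finset.mem_insert,
        Finset.mem_singleton]
      constructor
      · intro h
        have h0 : 2*(i - t) = 0 := by rw [mul_sub, h2t, h, sub_self]
        rcases (two_torsion m _).1 h0 with h3 | h3
        · left; exact sub_eq_zero.mp h3
        · right
          have := sub_eq_iff_eq_add.mp h3
          rw [this, add_comm]
      · rintro (rfl | rfl)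
        · exact h2t
        · rw [mul_add, h2t]
          have : (2 : ZMod (2*m)) * m = ((2*m : ℕ) : ZMod (2*m)) := by push_cast; ring
          rw [this, ZMod.natCast_self, add_zero]
    rw [hfil]
    rw [Finset.card_insert_of_notMem (by
      simp only [Finset.mem_singleton]
      intro h
      exact mhat_ne_zero m (by linear_combination -h)), Finset.card_singleton]
    norm_num
  · rw [if_neg h2]
    have hfil : Finset.univ.filter (fun i : ZMod (2*m) => 2*i = c) = ∅ := by
      ext i
      simp only [Finset.mem_filter, Finset.mem_univ, true_and, Finset.notMem_empty,
        iff_false]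
      intro h
      apply h2
      rw [← h, val_two_mul_zmod]
      have e : (2 * i.val) % (2*m) % 2 = (2 * i.val) % 2 := Nat.mod_mod_of_dvd _ ⟨m, rfl⟩
      omega
    rw [hfil]
    norm_num

lemma parity_succ (c : ZMod (2*m)) : 2 ∣ (c+1).val ↔ ¬ 2 ∣ c.val := by
  have hm0 := hm_pos m
  have h1 : (c+1).val = (c.val + (1 : ZMod (2*m)).val) % (2*m) := ZMod.val_add c 1
  rw [val_one_zmod] at h1
  have e : (c.val + 1) % (2*m) % 2 = (c.val + 1) % 2 := Nat.mod_mod_of_dvd _ ⟨m, rfl⟩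
  omega

lemma parity_add_sub (i j : ZMod (2*m)) : 2 ∣ (i+j).val ↔ 2 ∣ (i-j).val := by
  have hm0 := hm_pos m
  have h : i + j = (i - j) + 2*j := by ring
  rw [h, ZMod.val_add, val_two_mul_zmod]
  have e1 : ((i-j).val + (2*j.val) % (2*m)) % (2*m) % 2
      = ((i-j).val + (2*j.val) % (2*m)) % 2 := Nat.mod_mod_of_dvd _ ⟨m, rfl⟩
  have e2 : (2*j.val) % (2*m) % 2 = (2*j.val) % 2 := Nat.mod_mod_of_dvd _ ⟨m, rfl⟩
  omega

end Even

section Container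
set_option linter.unusedSectionVars false

def P3 {n : ℕ} (x : Matrix (ZMod n) (ZMod n) ℝ) : Prop :=
  ∀ w i j i' j' : ZMod n, (i - j) - (i' - j') = 2*w →
    x i j + x i' j' = x (i'+w) (j'-w) + x (i-w) (j+w)

noncomputable def ell (n : ℕ) [NeZero n] (x : Matrix (ZMod n) (ZMod n) ℝ) : ℝ :=
  ((∑ i : ZMod n, x i (-i)) + (∑ i : ZMod n, x i i) + (∑ i : ZMod n, x i (1-i))
    + (∑ i : ZMod n, x i (i-1))) - n * x 0 0 - n * x 1 0

def Cbody (n : ℕ) [NeZero n] : Set (Matrix (ZMod n) (ZMod n) ℝ) :=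
  {x | (∀ i j, 0 ≤ x i j) ∧ P3 x ∧ ell n x = 2}

variable (m : ℕ) [NeZero (2*m)]

lemma card_zmod_2m : (Finset.univ : Finset (ZMod (2*m))).card = 2*m := by
  rw [Finset.card_univ]
  exact ZMod.card (2*m)

lemma sum_ite_const (P : Prop) [Decidable P] :
    ∑ _i : ZMod (2*m), (if P then (1:ℝ) else 0) = if P then ((2*m : ℕ) : ℝ) else 0 := by
  rw [Finset.sum_const, card_zmod_2m]
  split <;> simp

lemma zero_ne_one_zmod : (0 : ZMod (2*m)) ≠ 1 := by
  intro h
  have := congrArg ZMod.val h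
  rw [ZMod.val_zero, val_one_zmod] at this
  omega

lemma ell_cases (c : ZMod (2*m))
    (S1 S2 S3 S4 E0 E1 : ℝ)
    (h1 : S1 = if 2 ∣ c.val then 2 else 0)
    (h2 : S2 = if c = 0 then ((2*m : ℕ) : ℝ) else 0)
    (h3 : S3 = if 2 ∣ (c+1).val then 2 else 0)
    (h4 : S4 = if c = 1 then ((2*m : ℕ) : ℝ) else 0)
    (h5 : E0 = if c = 0 then (1:ℝ) else 0)
    (h6 : E1 = if c = 1 then (1:ℝ) else 0) :
    (S1 + S2 + S3 + S4) - (2*m : ℕ) * E0 - (2*m : ℕ) * E1 = 2 := by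
  have hps := parity_succ m c
  by_cases hc0 : c = 0
  · have hpar : 2 ∣ c.val := by rw [hc0, ZMod.val_zero]; exact ⟨0, rfl⟩
    have hc1 : c ≠ 1 := by rw [hc0]; exact zero_ne_one_zmod m
    rw [h1, h2, h3, h4, h5, h6, if_pos hpar, if_pos hc0, if_neg (by tauto), if_neg hc1,
      if_pos hc0, if_neg hc1]
    ring
  · by_cases hc1 : c = 1
    · have hpar : ¬ 2 ∣ c.val := by rw [hc1, val_one_zmod]; omega
      rw [h1, h2, h3, h4, h5, h6, if_neg hpar, if_neg hc0, if_pos (by tauto), if_pos hc1,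
        if_neg hc0, if_pos hc1]
      ring
    · by_cases hpar : 2 ∣ c.val
      · rw [h1, h2, h3, h4, h5, h6, if_pos hpar, if_neg hc0, if_neg (by tauto), if_neg hc1,
          if_neg hc0, if_neg hc1]
        ring
      · rw [h1, h2, h3, h4, h5, h6, if_neg hpar, if_neg hc0, if_pos (by tauto), if_neg hc1,
          if_neg hc0, if_neg hc1]
        ring

lemma tr_mem_Cbody (c : ZMod (2*m)) : permMat (2*m) (tr (2*m) c) ∈ Cbody (2*m) := by
  refine ⟨fun i j => ?_, fun w i j i' j' hw => ?_, ?_⟩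
  · rw [permMat_tr]; split <;> norm_num
  · simp only [permMat_tr]
    have e1 : (i' + w = j' - w + c) ↔ (i = j + c) := by
      constructor <;> intro h
      · linear_combination h + hw
      · linear_combination h - hw
    have e2 : (i - w = j + w + c) ↔ (i' = j' + c) := by
      constructor <;> intro h
      · linear_combination h - hw
      · linear_combination h + hw
    rw [if_congr e1 rfl rfl, if_congr e2 rfl rfl]
  · show _ = (2:ℝ)
    unfold ell
    simp only [permMat_tr]
    have hcast : ((2*m : ℕ) : ℝ) = ((2*m : ℕ) : ℝ) := rfl
    refine (?_ : _ = (2:ℝ))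
    have s1 : ∑ i : ZMod (2*m), (if i = -i + c then (1:ℝ) else 0)
        = if 2 ∣ c.val then 2 else 0 := by
      rw [Finset.sum_congr rfl (fun i _ => if_congr
        (⟨fun h => by linear_combination h, fun h => by linear_combination h⟩
          : (i = -i + c) ↔ (2*i = c)) rfl rfl)]
      exact sum_ite_two_mul m c
    have s2 : ∑ i : ZMod (2*m), (if i = i + c then (1:ℝ) else 0)
        = if c = 0 then ((2*m : ℕ) : ℝ) else 0 := by
      simp_rw [left_eq_add]
      exact sum_ite_const m (c = 0)
    have s3 : ∑ i : ZMod (2*m), (if i = 1 - i + c then (1:ℝ) else 0)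
        = if 2 ∣ (c+1).val then 2 else 0 := by
      rw [Finset.sum_congr rfl (fun i _ => if_congr
        (⟨fun h => by linear_combination h, fun h => by linear_combination h⟩
          : (i = 1 - i + c) ↔ (2*i = c + 1)) rfl rfl)]
      exact sum_ite_two_mul m (c+1)
    have s4 : ∑ i : ZMod (2*m), (if i = i - 1 + c then (1:ℝ) else 0)
        = if c = 1 then ((2*m : ℕ) : ℝ) else 0 := by
      rw [Finset.sum_congr rfl (fun i _ => if_congr
        (⟨fun h => by linear_combination -h, fun h => by linear_combination -h⟩
          : (i = i - 1 + c) ↔ (c = 1)) rfl rfl)]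
      exact sum_ite_const m (c = 1)
    have e0 : (if (0 : ZMod (2*m)) = 0 + c then (1:ℝ) else 0) = if c = 0 then (1:ℝ) else 0 := by
      refine if_congr ⟨fun h => by linear_combination -h, fun h => by linear_combination -h⟩
        rfl rfl
    have e1 : (if (1 : ZMod (2*m)) = 0 + c then (1:ℝ) else 0) = if c = 1 then (1:ℝ) else 0 := by
      refine if_congr ⟨fun h => by linear_combination -h, fun h => by linear_combination -h⟩
        rfl rfl
    rw [s1, s2, s3, s4, e0, e1]
    push_cast
    have := ell_cases m c _ _ _ _ _ _ rfl rfl rfl rfl rfl rfl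
    push_cast at this
    linarith [this]

lemma re_mem_Cbody (c : ZMod (2*m)) : permMat (2*m) (re (2*m) c) ∈ Cbody (2*m) := by
  refine ⟨fun i j => ?_, fun w i j i' j' hw => ?_, ?_⟩
  · rw [permMat_re]; split <;> norm_num
  · simp only [permMat_re]
    have e1 : (i' + w = -(j' - w) + c) ↔ (i' = -j' + c) := by
      constructor <;> intro h
      · linear_combination h
      · linear_combination h
    have e2 : (i - w = -(j + w) + c) ↔ (i = -j + c) := by
      constructor <;> intro h
      · linear_combination h
      · linear_combination h
    rw [if_congr e1 rfl rfl, if_congr e2 rfl rfl]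
    ring
  · show _ = (2:ℝ)
    unfold ell
    simp only [permMat_re]
    have s1 : ∑ i : ZMod (2*m), (if i = -(-i) + c then (1:ℝ) else 0)
        = if c = 0 then ((2*m : ℕ) : ℝ) else 0 := by
      rw [Finset.sum_congr rfl (fun i _ => if_congr
        (⟨fun h => by linear_combination -h, fun h => by linear_combination -h⟩
          : (i = -(-i) + c) ↔ (c = 0)) rfl rfl)]
      exact sum_ite_const m (c = 0)
    have s2 : ∑ i : ZMod (2*m), (if i = -i + c then (1:ℝ) else 0)
        = if 2 ∣ c.val then 2 else 0 := by
      rw [Finset.sum_congr rfl (fun i _ => if_congr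
        (⟨fun h => by linear_combination h, fun h => by linear_combination h⟩
          : (i = -i + c) ↔ (2*i = c)) rfl rfl)]
      exact sum_ite_two_mul m c
    have s3 : ∑ i : ZMod (2*m), (if i = -(1 - i) + c then (1:ℝ) else 0)
        = if c = 1 then ((2*m : ℕ) : ℝ) else 0 := by
      rw [Finset.sum_congr rfl (fun i _ => if_congr
        (⟨fun h => by linear_combination -h, fun h => by linear_combination -h⟩
          : (i = -(1 - i) + c) ↔ (c = 1)) rfl rfl)]
      exact sum_ite_const m (c = 1)
    have s4 : ∑ i : ZMod (2*m), (if i = -(i - 1) + c then (1:ℝ) else 0)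
        = if 2 ∣ (c+1).val then 2 else 0 := by
      rw [Finset.sum_congr rfl (fun i _ => if_congr
        (⟨fun h => by linear_combination h, fun h => by linear_combination h⟩
          : (i = -(i - 1) + c) ↔ (2*i = (c+1))) rfl rfl)]
      exact sum_ite_two_mul m (c+1)
    have e0 : (if (0 : ZMod (2*m)) = -0 + c then (1:ℝ) else 0) = if c = 0 then (1:ℝ) else 0 := by
      refine if_congr ⟨fun h => by linear_combination -h, fun h => by linear_combination -h⟩
        rfl rfl
    have e1 : (if (1 : ZMod (2*m)) = -0 + c then (1:ℝ) else 0) = if c = 1 then (1:ℝ) else 0 := by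
      refine if_congr ⟨fun h => by linear_combination -h, fun h => by linear_combination -h⟩
        rfl rfl
    rw [s1, s2, s3, s4, e0, e1]
    have hps := parity_succ m c
    by_cases hc0 : c = 0
    · have hc1 : c ≠ 1 := by rw [hc0]; exact zero_ne_one_zmod m
      have hpar : 2 ∣ c.val := by rw [hc0, ZMod.val_zero]; exact ⟨0, rfl⟩
      rw [if_pos hc0, if_pos hpar, if_neg hc1, if_neg (by tauto), if_pos hc0, if_neg hc1]
      ring
    · by_cases hc1 : c = 1
      · have hpar : ¬ 2 ∣ c.val := by rw [hc1, val_one_zmod]; omega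
        rw [if_neg hc0, if_neg hpar, if_pos hc1, if_pos (by tauto), if_neg hc0, if_pos hc1]
        ring
      · by_cases hpar : 2 ∣ c.val
        · rw [if_neg hc0, if_pos hpar, if_neg hc1, if_neg (by tauto), if_neg hc0, if_neg hc1]
          ring
        · rw [if_neg hc0, if_neg hpar, if_neg hc1, if_pos (by tauto), if_neg hc0, if_neg hc1]
          ring

lemma convex_Cbody (n : ℕ) [NeZero n] : Convex ℝ (Cbody n) := by
  intro x hx y hy a b ha hb hab
  obtain ⟨hx1, hx3, hx2⟩ := hx
  obtain ⟨hy1, hy3, hy2⟩ := hy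
  have e : ∀ p q, (a • x + b • y) p q = a * x p q + b * y p q := fun p q => rfl
  refine ⟨fun i j => ?_, fun w i j i' j' hw => ?_, ?_⟩
  · rw [e]
    exact add_nonneg (mul_nonneg ha (hx1 i j)) (mul_nonneg hb (hy1 i j))
  · simp only [e]
    linear_combination a * hx3 w i j i' j' hw + b * hy3 w i j i' j' hw
  · unfold ell at hx2 hy2 ⊢
    simp only [e]
    rw [Finset.sum_add_distrib, Finset.sum_add_distrib, Finset.sum_add_distrib,
      Finset.sum_add_distrib, ← Finset.mul_sum, ← Finset.mul_sum, ← Finset.mul_sum,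
      ← Finset.mul_sum, ← Finset.mul_sum, ← Finset.mul_sum, ← Finset.mul_sum, ← Finset.mul_sum]
    linear_combination a * hx2 + b * hy2 + 2 * hab

lemma DP_subset_Cbody : DP (2*m) ⊆ Cbody (2*m) := by
  apply convexHull_min ?_ (convex_Cbody (2*m))
  rintro M ⟨σ, hσ, rfl⟩
  rcases dihedral_class (2*m) hσ with ⟨c, rfl⟩ | ⟨c, rfl⟩
  · exact tr_mem_Cbody m c
  · exact re_mem_Cbody m c

lemma mem_smul_DP_props {k : ℕ} {x : Matrix (ZMod (2*m)) (ZMod (2*m)) ℝ}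
    (hx : x ∈ (k:ℝ) • DP (2*m)) :
    (∀ i j, 0 ≤ x i j) ∧ P3 x ∧ ell (2*m) x = 2*k := by
  rw [Set.mem_smul_set] at hx
  obtain ⟨y, hy, rfl⟩ := hx
  obtain ⟨h1, h3, h2⟩ := DP_subset_Cbody m hy
  have e : ∀ p q, ((k:ℝ) • y) p q = (k:ℝ) * y p q := fun p q => rfl
  refine ⟨fun i j => ?_, fun w i j i' j' hw => ?_, ?_⟩
  · rw [e]
    exact mul_nonneg (by positivity) (h1 i j)
  · simp only [e]
    linear_combination (k:ℝ) * h3 w i j i' j' hw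
  · unfold ell at h2 ⊢
    simp only [e]
    rw [← Finset.mul_sum, ← Finset.mul_sum, ← Finset.mul_sum, ← Finset.mul_sum]
    linear_combination (k:ℝ) * h2

end Container

section Geom
set_option linter.unusedSectionVars false
variable (m : ℕ) [NeZero (2*m)]

def idx (d : ZMod (2*m)) : Fin m :=
  ⟨d.val / 2, by have h := ZMod.val_lt d; have := hm_pos m; omega⟩

def emb (a : Fin m) : ZMod (2*m) := ((a.val : ℕ) : ZMod (2*m))

def EB (a : Fin m) (p : Bool) : ZMod (2*m) := ((2*a.val + p.toNat : ℕ) : ZMod (2*m))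

lemma val_EB (a : Fin m) (p : Bool) : (EB m a p).val = 2*a.val + p.toNat := by
  have := a.isLt
  apply ZMod.val_cast_of_lt
  cases p <;> simp <;> omega

lemma idx_EB (a : Fin m) (p : Bool) : idx m (EB m a p) = a := by
  apply Fin.ext
  show (EB m a p).val / 2 = a.val
  rw [val_EB]
  cases p <;> simp <;> omega

lemma EB_parity (a : Fin m) (p : Bool) : (2 ∣ (EB m a p).val) ↔ p = false := by
  rw [val_EB]
  cases p <;> simp <;> omega

lemma EB_false (a : Fin m) : EB m a false = 2 * emb m a := by
  unfold EB emb
  simp only [Bool.toNat_false]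
  push_cast
  ring

lemma EB_true (a : Fin m) : EB m a true = 2 * emb m a + 1 := by
  unfold EB emb
  simp only [Bool.toNat_true]
  push_cast
  ring

lemma EB_bijective : Function.Bijective (fun q : Fin m × Bool => EB m q.1 q.2) := by
  constructor
  · rintro ⟨a, p⟩ ⟨a', p'⟩ h
    simp only at h
    have hv := congrArg ZMod.val h
    rw [val_EB, val_EB] at hv
    have hpt : p.toNat ≤ 1 := by cases p <;> simp
    have hpt' : p'.toNat ≤ 1 := by cases p' <;> simp
    have ha : a.val = a'.val := by omega
    have hp : p.toNat = p'.toNat := by omega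
    refine Prod.ext (Fin.ext ha) ?_
    cases p <;> cases p' <;> simp_all
  · intro c
    have hv := ZMod.val_lt c
    have hm0 := hm_pos m
    by_cases hpar : 2 ∣ c.val
    · refine ⟨(idx m c, false), ?_⟩
      apply zmod_eq_of_val_eq
      rw [val_EB]
      show 2 * (c.val / 2) + 0 = c.val
      omega
    · refine ⟨(idx m c, true), ?_⟩
      apply zmod_eq_of_val_eq
      rw [val_EB]
      show 2 * (c.val / 2) + 1 = c.val
      omega

lemma sum_split (f : ZMod (2*m) → ℝ) :
    ∑ c : ZMod (2*m), f c = ∑ a : Fin m, (f (EB m a false) + f (EB m a true)) := by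
  rw [← Fintype.sum_bijective _ (EB_bijective m) (fun q : Fin m × Bool => f (EB m q.1 q.2)) f
    (fun q => rfl)]
  rw [Fintype.sum_prod_type]
  refine Finset.sum_congr rfl fun a _ => ?_
  rw [Fintype.sum_bool]
  ring

-- vectors of coefficients
def vecA (t : Tup m) (c : ZMod (2*m)) : ℝ :=
  if 2 ∣ c.val then ((t.1.1.1.1 (idx m c) : ℕ) : ℝ) else ((t.2.1.1.1 (idx m c) : ℕ) : ℝ)

def vecB (t : Tup m) (c : ZMod (2*m)) : ℝ :=
  if 2 ∣ c.val then ((t.1.1.2.1 (idx m c) + t.1.2 : ℕ) : ℝ)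
  else ((t.2.1.2.1 (idx m c) + t.2.2 : ℕ) : ℝ)

def Phi (t : Tup m) : Matrix (ZMod (2*m)) (ZMod (2*m)) ℝ :=
  Matrix.of fun i j => vecA m t (i - j) + vecB m t (i + j)

lemma vecA_nonneg (t : Tup m) (c : ZMod (2*m)) : 0 ≤ vecA m t c := by
  unfold vecA; split <;> positivity

lemma vecB_nonneg (t : Tup m) (c : ZMod (2*m)) : 0 ≤ vecB m t c := by
  unfold vecB; split <;> positivity

lemma sum_vec (t : Tup m) :
    ∑ c : ZMod (2*m), (vecA m t c + vecB m t c) = (wT m t : ℝ) := by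
  rw [sum_split]
  have hA0 : ∀ a : Fin m, vecA m t (EB m a false) = (t.1.1.1.1 a : ℝ) := by
    intro a
    unfold vecA
    rw [if_pos ((EB_parity m a false).2 rfl), idx_EB]
  have hA1 : ∀ a : Fin m, vecA m t (EB m a true) = (t.2.1.1.1 a : ℝ) := by
    intro a
    unfold vecA
    rw [if_neg (fun h => by simpa using (EB_parity m a true).1 h), idx_EB]
  have hB0 : ∀ a : Fin m, vecB m t (EB m a false) = ((t.1.1.2.1 a + t.1.2 : ℕ) : ℝ) := by
    intro a
    unfold vecB
    rw [if_pos ((EB_parity m a false).2 rfl), idx_EB]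
  have hB1 : ∀ a : Fin m, vecB m t (EB m a true) = ((t.2.1.2.1 a + t.2.2 : ℕ) : ℝ) := by
    intro a
    unfold vecB
    rw [if_neg (fun h => by simpa using (EB_parity m a true).1 h), idx_EB]
  have : ∀ a : Fin m,
      (vecA m t (EB m a false) + vecB m t (EB m a false))
        + (vecA m t (EB m a true) + vecB m t (EB m a true))
      = ((t.1.1.1.1 a : ℝ) + (t.1.1.2.1 a : ℝ) + (t.2.1.1.1 a : ℝ) + (t.2.1.2.1 a : ℝ))
        + ((t.1.2 : ℝ) + (t.2.2 : ℝ)) := by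
    intro a
    rw [hA0, hA1, hB0, hB1]
    push_cast
    ring
  rw [Finset.sum_congr rfl (fun a _ => this a)]
  rw [Finset.sum_add_distrib, Finset.sum_const, Finset.card_univ, Fintype.card_fin]
  unfold wT wB wV
  push_cast
  rw [Finset.sum_add_distrib, Finset.sum_add_distrib, Finset.sum_add_distrib]
  push_cast
  ring

lemma Phi_eq_sum (t : Tup m) :
    Phi m t = (∑ c : ZMod (2*m), vecA m t c • permMat (2*m) (tr (2*m) c))
      + (∑ c : ZMod (2*m), vecB m t c • permMat (2*m) (re (2*m) c)) := by
  ext i j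
  simp only [Matrix.add_apply, Matrix.sum_apply, Matrix.smul_apply, permMat_tr, permMat_re,
    smul_eq_mul, mul_ite, mul_one, mul_zero]
  rw [Finset.sum_congr rfl (fun c _ => if_congr
    (⟨fun h => by linear_combination -h, fun h => by linear_combination -h⟩
      : (i = j + c) ↔ (c = i - j)) rfl rfl)]
  rw [Finset.sum_congr rfl (fun c _ => if_congr
    (⟨fun h => by linear_combination -h, fun h => by linear_combination -h⟩
      : (i = -j + c) ↔ (c = i + j)) rfl rfl)]
  rw [Finset.sum_ite_eq' Finset.univ (i - j) (vecA m t),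
    Finset.sum_ite_eq' Finset.univ (i + j) (vecB m t)]
  simp [Phi]

lemma DP_nonempty : (DP (2*m)).Nonempty :=
  ⟨permMat (2*m) 1, subset_convexHull _ _ ⟨1, one_mem _, rfl⟩⟩

lemma Phi_mem {k : ℕ} (t : Tup m) (hw : wT m t = k) : Phi m t ∈ (k:ℝ) • DP (2*m) := by
  rcases Nat.eq_zero_or_pos k with rfl | hk
  · -- k = 0
    have hz : Phi m t = 0 := by
      have hm0 := hm_pos m
      unfold wT wB at hw
      have h11 : wV t.1.1.1 = 0 := by omega
      have h12 : wV t.1.1.2 = 0 := by omega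
      have h21 : wV t.2.1.1 = 0 := by omega
      have h22 : wV t.2.1.2 = 0 := by omega
      have he1 : t.1.2 = 0 := by
        have h : m * t.1.2 = 0 := by omega
        rcases Nat.mul_eq_zero.mp h with h' | h'
        · omega
        · exact h'
      have he2 : t.2.2 = 0 := by
        have h : m * t.2.2 = 0 := by omega
        rcases Nat.mul_eq_zero.mp h with h' | h'
        · omega
        · exact h'
      have hv : ∀ (v : Vmt m), wV v = 0 → ∀ a, v.1 a = 0 := by
        intro v hv a
        have := Finset.single_le_sum (f := v.1) (fun i _ => Nat.zero_le _) (Finset.mem_univ a)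
        unfold wV at hv
        omega
      ext i j
      show vecA m t (i - j) + vecB m t (i + j) = 0
      unfold vecA vecB
      rw [hv _ h11, hv _ h21, hv _ h12, hv _ h22, he1, he2]
      split <;> split <;> norm_num
    rw [hz, Nat.cast_zero, Set.zero_smul_set (DP_nonempty m)]
    simp
  · classical
    set w : Bool × ZMod (2*m) → ℝ :=
      fun q => if q.1 then vecB m t q.2 else vecA m t q.2 with hwdef
    set z : Bool × ZMod (2*m) → Matrix (ZMod (2*m)) (ZMod (2*m)) ℝ :=
      fun q => if q.1 then permMat (2*m) (re (2*m) q.2) else permMat (2*m) (tr (2*m) q.2)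
      with hzdef
    have hsumw : ∑ q : Bool × ZMod (2*m), w q = (k : ℝ) := by
      rw [Fintype.sum_prod_type, Fintype.sum_bool]
      simp only [hwdef, Bool.false_eq_true, if_true, if_false]
      rw [← hw, ← sum_vec m t, Finset.sum_add_distrib]
      ring
    have hw0 : ∀ q ∈ (Finset.univ : Finset (Bool × ZMod (2*m))), 0 ≤ w q := by
      intro q _
      rcases q with ⟨p, c⟩
      cases p <;> simp [hwdef, vecA_nonneg, vecB_nonneg]
    have hwpos : 0 < ∑ q : Bool × ZMod (2*m), w q := by
      rw [hsumw]; exact_mod_cast hk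
    have hzmem : ∀ q ∈ (Finset.univ : Finset (Bool × ZMod (2*m))), z q ∈
        {M | ∃ σ ∈ dihedral (2*m), M = permMat (2*m) σ} := by
      rintro ⟨p, c⟩ _
      cases p
      · exact ⟨tr (2*m) c, tr_mem (2*m) c, rfl⟩
      · exact ⟨re (2*m) c, re_mem (2*m) c, rfl⟩
    have hmem := Finset.centerMass_mem_convexHull Finset.univ hw0 hwpos hzmem
    rw [Set.mem_smul_set]
    refine ⟨_, hmem, ?_⟩
    unfold Finset.centerMass
    rw [hsumw, smul_smul]
    rw [mul_inv_cancel₀ (by exact_mod_cast hk.ne'), one_smul]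
    rw [Fintype.sum_prod_type, Fintype.sum_bool]
    simp only [hwdef, hzdef, Bool.false_eq_true, if_true, if_false]
    rw [Phi_eq_sum]
    abel
end Geom

section Geom2
set_option linter.unusedSectionVars false
variable (m : ℕ) [NeZero (2*m)]

lemma emb_idx_even (d : ZMod (2*m)) (h2 : 2 ∣ d.val) : 2 * emb m (idx m d) = d := by
  apply zmod_eq_of_val_eq
  rw [val_two_mul_zmod]
  unfold emb idx
  rw [ZMod.val_cast_of_lt (by have := ZMod.val_lt d; have := hm_pos m; simp; omega)]
  have hlt := ZMod.val_lt d
  simp only []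
  have h1 : 2*(d.val/2) = d.val := by omega
  rw [h1]
  exact Nat.mod_eq_of_lt hlt

lemma emb_idx_odd (d : ZMod (2*m)) (h2 : ¬ 2 ∣ d.val) : 2 * emb m (idx m d) + 1 = d := by
  apply zmod_eq_of_val_eq
  have hv1 : (1 : ZMod (2*m)).val = 1 := val_one_zmod m
  have hlt := ZMod.val_lt d
  have hm0 := hm_pos m
  have hv : (2 * emb m (idx m d)).val = 2*(d.val/2) := by
    rw [val_two_mul_zmod]
    unfold emb idx
    rw [ZMod.val_cast_of_lt (by simp; omega)]
    simp only []
    exact Nat.mod_eq_of_lt (by omega)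
  rw [ZMod.val_add, hv, hv1]
  have h1 : 2*(d.val/2) + 1 = d.val := by omega
  rw [h1]
  exact Nat.mod_eq_of_lt hlt

lemma rect_unique (c r c' r' : Fin m → ℕ) (e e' : ℕ)
    (hc : ∃ a, c a = 0) (hr : ∃ b, r b = 0) (hc' : ∃ a, c' a = 0) (hr' : ∃ b, r' b = 0)
    (h : ∀ a b, c a + (r b + e) = c' a + (r' b + e')) :
    c = c' ∧ r = r' ∧ e = e' := by
  obtain ⟨a0, ha0⟩ := hc
  obtain ⟨b0, hb0⟩ := hr
  obtain ⟨a0', ha0'⟩ := hc'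
  obtain ⟨b0', hb0'⟩ := hr'
  have h1 := h a0 b0
  have h2 := h a0' b0'
  have he : e = e' ∧ c' a0 = 0 ∧ r' b0 = 0 ∧ c a0' = 0 ∧ r b0' = 0 := by omega
  refine ⟨funext fun a => ?_, funext fun b => ?_, he.1⟩
  · have := h a b0
    omega
  · have := h a0 b
    omega

lemma Phi_entry_even (t : Tup m) (a b : Fin m) :
    Phi m t (emb m b + emb m a) (emb m b - emb m a)
      = ((t.1.1.1.1 a + (t.1.1.2.1 b + t.1.2) : ℕ) : ℝ) := by
  have hd : (emb m b + emb m a) - (emb m b - emb m a) = EB m a false := by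
    rw [EB_false]; ring
  have hs : (emb m b + emb m a) + (emb m b - emb m a) = EB m b false := by
    rw [EB_false]; ring
  show vecA m t _ + vecB m t _ = _
  rw [hd, hs]
  unfold vecA vecB
  rw [if_pos ((EB_parity m a false).2 rfl), if_pos ((EB_parity m b false).2 rfl),
    idx_EB, idx_EB]
  push_cast
  ring

lemma Phi_entry_odd (t : Tup m) (a b : Fin m) :
    Phi m t (emb m b + emb m a + 1) (emb m b - emb m a)
      = ((t.2.1.1.1 a + (t.2.1.2.1 b + t.2.2) : ℕ) : ℝ) := by
  have hd : (emb m b + emb m a + 1) - (emb m b - emb m a) = EB m a true := by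
    rw [EB_true]; ring
  have hs : (emb m b + emb m a + 1) + (emb m b - emb m a) = EB m b true := by
    rw [EB_true]; ring
  show vecA m t _ + vecB m t _ = _
  rw [hd, hs]
  unfold vecA vecB
  rw [if_neg (fun h => by simpa using (EB_parity m a true).1 h),
    if_neg (fun h => by simpa using (EB_parity m b true).1 h), idx_EB, idx_EB]
  push_cast
  ring

lemma Phi_injective : Function.Injective (Phi m) := by
  intro t t' h
  have hev : ∀ a b : Fin m,
      t.1.1.1.1 a + (t.1.1.2.1 b + t.1.2) = t'.1.1.1.1 a + (t'.1.1.2.1 b + t'.1.2) := by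
    intro a b
    have h0 := congrArg (fun M => M (emb m b + emb m a) (emb m b - emb m a)) h
    simp only [Phi_entry_even] at h0
    exact_mod_cast h0
  have hod : ∀ a b : Fin m,
      t.2.1.1.1 a + (t.2.1.2.1 b + t.2.2) = t'.2.1.1.1 a + (t'.2.1.2.1 b + t'.2.2) := by
    intro a b
    have h0 := congrArg (fun M => M (emb m b + emb m a + 1) (emb m b - emb m a)) h
    simp only [Phi_entry_odd] at h0
    exact_mod_cast h0
  obtain ⟨hce, hre, hee⟩ := rect_unique m _ _ _ _ _ _ t.1.1.1.2 t.1.1.2.2 t'.1.1.1.2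
    t'.1.1.2.2 hev
  obtain ⟨hco, hro, heo⟩ := rect_unique m _ _ _ _ _ _ t.2.1.1.2 t.2.1.2.2 t'.2.1.1.2
    t'.2.1.2.2 hod
  rcases t with ⟨⟨⟨⟨c1, p1⟩, ⟨r1, q1⟩⟩, e1⟩, ⟨⟨⟨c2, p2⟩, ⟨r2, q2⟩⟩, e2⟩⟩
  rcases t' with ⟨⟨⟨⟨c1', p1'⟩, ⟨r1', q1'⟩⟩, e1'⟩, ⟨⟨⟨c2', p2'⟩, ⟨r2', q2'⟩⟩, e2'⟩⟩
  simp only at hce hre hee hco hro heo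
  subst hce hre hee hco hro heo
  rfl

-- decomposition of a rectangular (additive) matrix
lemma block_decomp (hm0 : 0 < m) (u : Fin m → Fin m → ℕ)
    (hrect : ∀ a b a' b', u a b + u a' b' = u a b' + u a' b) :
    ∃ (c r : Fin m → ℕ) (e : ℕ), (∃ a, c a = 0) ∧ (∃ b, r b = 0) ∧
      (∀ a b, u a b = c a + (r b + e)) := by
  haveI : Nonempty (Fin m) := ⟨⟨0, hm0⟩⟩
  have hne : (Finset.univ : Finset (Fin m)).Nonempty := Finset.univ_nonempty
  set C : Fin m → ℕ := fun b => Finset.univ.inf' hne (fun a => u a b) with hC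
  set e : ℕ := Finset.univ.inf' hne C with he
  have hCle : ∀ a b, C b ≤ u a b := fun a b => Finset.inf'_le _ (Finset.mem_univ a)
  have hele : ∀ b, e ≤ C b := fun b => Finset.inf'_le _ (Finset.mem_univ b)
  have htrans : ∀ a b b', u a b + C b' = u a b' + C b := by
    intro a b b'
    obtain ⟨a1, -, ha1⟩ := Finset.exists_mem_eq_inf' hne (fun a => u a b)
    obtain ⟨a2, -, ha2⟩ := Finset.exists_mem_eq_inf' hne (fun a => u a b')
    have e1 : C b = u a1 b := ha1
    have e2 : C b' = u a2 b' := ha2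
    have r1 := hrect a b a1 b'
    have r2 := hrect a1 b a2 b'
    have i1 := hCle a1 b'
    have i2 := hCle a2 b
    omega
  set b0 : Fin m := ⟨0, hm0⟩ with hb0
  refine ⟨fun a => u a b0 - C b0, fun b => C b - e, e, ?_, ?_, ?_⟩
  · obtain ⟨a1, -, ha1⟩ := Finset.exists_mem_eq_inf' hne (fun a => u a b0)
    refine ⟨a1, ?_⟩
    show u a1 b0 - C b0 = 0
    have : C b0 = u a1 b0 := ha1
    omega
  · obtain ⟨b1, -, hb1⟩ := Finset.exists_mem_eq_inf' hne C
    refine ⟨b1, ?_⟩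
    show C b1 - e = 0
    have : e = C b1 := hb1
    omega
  · intro a b
    show u a b = (u a b0 - C b0) + ((C b - e) + e)
    have h1 := htrans a b0 b
    have h2 := hCle a b0
    have h3 := hele b
    have h4 := hele b0
    have h5 := hCle a b
    omega

end Geom2

section Geom3
set_option linter.unusedSectionVars false
set_option maxHeartbeats 1000000
variable (m : ℕ) [NeZero (2*m)]

lemma two_mhat : 2 * (m : ZMod (2*m)) = 0 := by
  have h : ((2*m : ℕ) : ZMod (2*m)) = 0 := ZMod.natCast_self _
  push_cast at h
  linear_combination h

def EB2 (a : Fin m) (p : Bool) : ZMod (2*m) := ((a.val + p.toNat * m : ℕ) : ZMod (2*m))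

lemma val_EB2 (a : Fin m) (p : Bool) : (EB2 m a p).val = a.val + p.toNat * m := by
  have := a.isLt
  apply ZMod.val_cast_of_lt
  cases p <;> simp <;> omega

lemma EB2_false (a : Fin m) : EB2 m a false = emb m a := by
  unfold EB2 emb
  simp

lemma EB2_true (a : Fin m) : EB2 m a true = emb m a + m := by
  unfold EB2 emb
  push_cast [Bool.toNat_true]
  ring

lemma EB2_bijective : Function.Bijective (fun q : Fin m × Bool => EB2 m q.1 q.2) := by
  constructor
  · rintro ⟨a, p⟩ ⟨a', p'⟩ h
    simp only at h
    have hv := congrArg ZMod.val h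
    rw [val_EB2, val_EB2] at hv
    have := a.isLt
    have := a'.isLt
    have hpt : p.toNat ≤ 1 := by cases p <;> simp
    have hpt' : p'.toNat ≤ 1 := by cases p' <;> simp
    have ha : a.val = a'.val := by
      rcases p <;> rcases p' <;> simp at hv ⊢ <;> omega
    have hp : p.toNat = p'.toNat := by
      rcases p <;> rcases p' <;> simp at hv ⊢ <;> omega
    refine Prod.ext (Fin.ext ha) ?_
    cases p <;> cases p' <;> simp_all
  · intro c
    have hv := ZMod.val_lt c
    have hm0 := hm_pos m
    by_cases hlt : c.val < m
    · refine ⟨(⟨c.val, hlt⟩, false), ?_⟩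
      apply zmod_eq_of_val_eq
      rw [val_EB2]
      simp
    · refine ⟨(⟨c.val - m, by omega⟩, true), ?_⟩
      apply zmod_eq_of_val_eq
      rw [val_EB2]
      simp
      omega

lemma sum_split2 (f : ZMod (2*m) → ℝ) :
    ∑ c : ZMod (2*m), f c = ∑ a : Fin m, (f (emb m a) + f (emb m a + m)) := by
  rw [← Fintype.sum_bijective _ (EB2_bijective m) (fun q : Fin m × Bool => f (EB2 m q.1 q.2)) f
    (fun q => rfl)]
  rw [Fintype.sum_prod_type]
  refine Finset.sum_congr rfl fun a _ => ?_
  rw [Fintype.sum_bool, EB2_false, EB2_true]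
  ring

theorem recon {k : ℕ} {x : Matrix (ZMod (2*m)) (ZMod (2*m)) ℝ}
    (hx : x ∈ (k:ℝ) • DP (2*m)) (hint : IsInt (2*m) x) :
    ∃ t : Tup m, wT m t = k ∧ Phi m t = x := by
  have hm0 := hm_pos m
  obtain ⟨h1, h3, h2⟩ := mem_smul_DP_props m hx
  have hnat : ∀ i j, ∃ z : ℕ, x i j = (z : ℝ) := by
    intro i j
    obtain ⟨z, hz⟩ := hint i j
    have hp := h1 i j
    refine ⟨z.toNat, ?_⟩
    have h' : (z.toNat : ℤ) = z := Int.toNat_of_nonneg (by rw [hz] at hp; exact_mod_cast hp)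
    rw [hz]
    exact_mod_cast h'.symm
  choose nx hnx using hnat
  have hP2 : ∀ i j, x i j = x (i + m) (j + m) := by
    intro i j
    have h2m := two_mhat m
    have hh := h3 (m : ZMod (2*m)) i j i j (by rw [sub_self]; exact h2m.symm)
    have e1 : j - (m:ZMod (2*m)) = j + m := by linear_combination -h2m
    have e2 : i - (m:ZMod (2*m)) = i + m := by linear_combination -h2m
    rw [e1, e2] at hh
    linarith
  set z0 : Fin m := ⟨0, hm0⟩ with hz0
  have hembz0 : emb m z0 = 0 := by unfold emb; simp [hz0]
  set ue : Fin m → Fin m → ℕ := fun a b => nx (emb m b + emb m a) (emb m b - emb m a) with hue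
  set uo : Fin m → Fin m → ℕ := fun a b => nx (emb m b + emb m a + 1) (emb m b - emb m a)
    with huo
  have hrect_e : ∀ a b a' b', ue a b + ue a' b' = ue a b' + ue a' b := by
    intro a b a' b'
    have hcond : ((emb m b + emb m a) - (emb m b - emb m a))
        - ((emb m b' + emb m a') - (emb m b' - emb m a')) = 2*(emb m a - emb m a') := by ring
    have hh := h3 (emb m a - emb m a') _ _ _ _ hcond
    have p1 : (emb m b' + emb m a') + (emb m a - emb m a') = emb m b' + emb m a := by ring
    have p2 : (emb m b' - emb m a') - (emb m a - emb m a') = emb m b' - emb m a := by ring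
    have p3 : (emb m b + emb m a) - (emb m a - emb m a') = emb m b + emb m a' := by ring
    have p4 : (emb m b - emb m a) + (emb m a - emb m a') = emb m b - emb m a' := by ring
    rw [p1, p2, p3, p4] at hh
    simp only [hnx] at hh
    exact_mod_cast hh
  have hrect_o : ∀ a b a' b', uo a b + uo a' b' = uo a b' + uo a' b := by
    intro a b a' b'
    have hcond : ((emb m b + emb m a + 1) - (emb m b - emb m a))
        - ((emb m b' + emb m a' + 1) - (emb m b' - emb m a')) = 2*(emb m a - emb m a') := by
      ring
    have hh := h3 (emb m a - emb m a') _ _ _ _ hcond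
    have p1 : (emb m b' + emb m a' + 1) + (emb m a - emb m a') = emb m b' + emb m a + 1 := by
      ring
    have p2 : (emb m b' - emb m a') - (emb m a - emb m a') = emb m b' - emb m a := by ring
    have p3 : (emb m b + emb m a + 1) - (emb m a - emb m a') = emb m b + emb m a' + 1 := by
      ring
    have p4 : (emb m b - emb m a) + (emb m a - emb m a') = emb m b - emb m a' := by ring
    rw [p1, p2, p3, p4] at hh
    simp only [hnx] at hh
    exact_mod_cast hh
  obtain ⟨c1, r1, e1, hc1, hr1, hdec1⟩ := block_decomp m hm0 ue hrect_e
  obtain ⟨c2, r2, e2, hc2, hr2, hdec2⟩ := block_decomp m hm0 uo hrect_o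
  refine ⟨(((⟨c1, hc1⟩, ⟨r1, hr1⟩), e1), ((⟨c2, hc2⟩, ⟨r2, hr2⟩), e2)), ?_, ?_⟩
  · -- weight
    have hsum1 : ∑ i : ZMod (2*m), x i (-i) = 2 * ((∑ a, ue a z0 : ℕ) : ℝ) := by
      rw [sum_split2 m (fun i => x i (-i))]
      push_cast
      rw [Finset.mul_sum]
      refine Finset.sum_congr rfl fun a _ => ?_
      have hpos : ue a z0 = nx (emb m a) (-(emb m a)) := by
        rw [hue]
        simp only [hembz0, zero_add, zero_sub]
      have hpart : x (emb m a + m) (-(emb m a + m)) = x (emb m a) (-(emb m a)) := by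
        have e1 : -(emb m a + (m : ZMod (2*m))) = -(emb m a) + m := by
          linear_combination -(two_mhat m)
        rw [e1]
        exact (hP2 (emb m a) (-(emb m a))).symm
      rw [hpart, hpos, ← hnx]
      ring
    have hsum2 : ∑ i : ZMod (2*m), x i i = 2 * ((∑ b, ue z0 b : ℕ) : ℝ) := by
      rw [sum_split2 m (fun i => x i i)]
      push_cast
      rw [Finset.mul_sum]
      refine Finset.sum_congr rfl fun b _ => ?_
      have hpos : ue z0 b = nx (emb m b) (emb m b) := by
        rw [hue]
        simp only [hembz0, add_zero, sub_zero]
      have hpart : x (emb m b + m) (emb m b + m) = x (emb m b) (emb m b) :=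
        (hP2 (emb m b) (emb m b)).symm
      rw [hpart, hpos, ← hnx]
      ring
    have hshift : ∀ f : ZMod (2*m) → ℝ, ∑ i : ZMod (2*m), f i = ∑ i : ZMod (2*m), f (i+1) :=
      fun f => (Fintype.sum_equiv (Equiv.addRight (1 : ZMod (2*m)))
        (fun i => f (i+1)) f (fun i => rfl)).symm
    have hsum3 : ∑ i : ZMod (2*m), x i (1-i) = 2 * ((∑ a, uo a z0 : ℕ) : ℝ) := by
      rw [hshift (fun i => x i (1-i))]
      have hre : ∀ i : ZMod (2*m), x (i+1) (1-(i+1)) = x (i+1) (-i) := by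
        intro i
        congr 1
        ring
      rw [Finset.sum_congr rfl (fun i _ => hre i)]
      rw [sum_split2 m (fun i => x (i+1) (-i))]
      push_cast
      rw [Finset.mul_sum]
      refine Finset.sum_congr rfl fun a _ => ?_
      have hpos : uo a z0 = nx (emb m a + 1) (-(emb m a)) := by
        rw [huo]
        simp only [hembz0, zero_add, zero_sub]
      have hpart : x (emb m a + m + 1) (-(emb m a + m)) = x (emb m a + 1) (-(emb m a)) := by
        have e1 : -(emb m a + (m : ZMod (2*m))) = -(emb m a) + m := by
          linear_combination -(two_mhat m)
        have e2 : emb m a + (m : ZMod (2*m)) + 1 = (emb m a + 1) + m := by ring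
        rw [e1, e2]
        exact (hP2 (emb m a + 1) (-(emb m a))).symm
      rw [hpart, hpos, ← hnx]
      ring
    have hsum4 : ∑ i : ZMod (2*m), x i (i-1) = 2 * ((∑ b, uo z0 b : ℕ) : ℝ) := by
      rw [hshift (fun i => x i (i-1))]
      have hre : ∀ i : ZMod (2*m), x (i+1) ((i+1)-1) = x (i+1) i := by
        intro i
        congr 1
        ring
      rw [Finset.sum_congr rfl (fun i _ => hre i)]
      rw [sum_split2 m (fun i => x (i+1) i)]
      push_cast
      rw [Finset.mul_sum]
      refine Finset.sum_congr rfl fun b _ => ?_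
      have hpos : uo z0 b = nx (emb m b + 1) (emb m b) := by
        rw [huo]
        simp only [hembz0, add_zero, sub_zero]
      have hpart : x (emb m b + m + 1) (emb m b + m) = x (emb m b + 1) (emb m b) := by
        have e2 : emb m b + (m : ZMod (2*m)) + 1 = (emb m b + 1) + m := by ring
        rw [e2]
        exact (hP2 (emb m b + 1) (emb m b)).symm
      rw [hpart, hpos, ← hnx]
      ring
    have hx00 : x 0 0 = ((ue z0 z0 : ℕ) : ℝ) := by
      rw [hue]
      simp only [hembz0, add_zero, sub_zero, zero_add, zero_sub, neg_zero]
      rw [hnx]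
    have hx10 : x 1 0 = ((uo z0 z0 : ℕ) : ℝ) := by
      rw [huo]
      simp only [hembz0, add_zero, sub_zero, zero_add, zero_sub, neg_zero]
      rw [hnx]
    unfold ell at h2
    rw [hsum1, hsum2, hsum3, hsum4, hx00, hx10] at h2
    -- ℕ-level identities
    have hNe : (∑ a, ue a z0) + (∑ b, ue z0 b)
        = (∑ a, c1 a) + (∑ b, r1 b) + m*e1 + m * ue z0 z0 := by
      have ha : ∑ a, ue a z0 = (∑ a, c1 a) + m*(r1 z0 + e1) := by
        simp_rw [hdec1]
        rw [Finset.sum_add_distrib, Finset.sum_const, Finset.card_univ, Fintype.card_fin,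
          smul_eq_mul]
      have hb : ∑ b, ue z0 b = m*(c1 z0) + ((∑ b, r1 b) + m*e1) := by
        simp_rw [hdec1]
        rw [Finset.sum_add_distrib, Finset.sum_add_distrib, Finset.sum_const, Finset.sum_const,
          Finset.card_univ, Fintype.card_fin, smul_eq_mul, smul_eq_mul]
      have hz := hdec1 z0 z0
      have hmul : m * ue z0 z0 = m * c1 z0 + (m * r1 z0 + m * e1) := by
        rw [hz]; ring
      have hx1 : m*(r1 z0 + e1) = m*r1 z0 + m*e1 := by ring
      omega
    have hNo : (∑ a, uo a z0) + (∑ b, uo z0 b)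
        = (∑ a, c2 a) + (∑ b, r2 b) + m*e2 + m * uo z0 z0 := by
      have ha : ∑ a, uo a z0 = (∑ a, c2 a) + m*(r2 z0 + e2) := by
        simp_rw [hdec2]
        rw [Finset.sum_add_distrib, Finset.sum_const, Finset.card_univ, Fintype.card_fin,
          smul_eq_mul]
      have hb : ∑ b, uo z0 b = m*(c2 z0) + ((∑ b, r2 b) + m*e2) := by
        simp_rw [hdec2]
        rw [Finset.sum_add_distrib, Finset.sum_add_distrib, Finset.sum_const, Finset.sum_const,
          Finset.card_univ, Fintype.card_fin, smul_eq_mul, smul_eq_mul]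
      have hz := hdec2 z0 z0
      have hmul : m * uo z0 z0 = m * c2 z0 + (m * r2 z0 + m * e2) := by
        rw [hz]; ring
      have hx1 : m*(r2 z0 + e2) = m*r2 z0 + m*e2 := by ring
      omega
    -- cast down
    have hcast : ((∑ a, ue a z0) + (∑ b, ue z0 b) + (∑ a, uo a z0) + (∑ b, uo z0 b) : ℕ)
        = (k + m * ue z0 z0 + m * uo z0 z0 : ℕ) := by
      have : (((∑ a, ue a z0) + (∑ b, ue z0 b) + (∑ a, uo a z0) + (∑ b, uo z0 b) : ℕ) : ℝ)
          = ((k + m * ue z0 z0 + m * uo z0 z0 : ℕ) : ℝ) := by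
        push_cast at h2 ⊢
        linarith
      exact_mod_cast this
    show wB m _ + wB m _ = k
    unfold wB wV
    simp only
    omega
  · -- Phi = x
    ext i j
    show vecA m _ (i-j) + vecB m _ (i+j) = x i j
    by_cases hpar : 2 ∣ (i-j).val
    · have hpar2 : 2 ∣ (i+j).val := (parity_add_sub m i j).2 hpar
      set a := idx m (i-j) with hadef
      set b := idx m (i+j) with hbdef
      have key : x i j = ((c1 a + (r1 b + e1) : ℕ) : ℝ) := by
        have h2A := emb_idx_even m (i-j) hpar
        have h2B := emb_idx_even m (i+j) hpar2
        have htor : 2*((emb m b + emb m a) - i) = 0 := by linear_combination h2A + h2B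
        rcases (two_torsion m _).1 htor with hc | hc
        · have hBA : emb m b + emb m a = i := sub_eq_zero.mp hc
          have hBA2 : emb m b - emb m a = j := by linear_combination hBA - h2A
          rw [← hBA, ← hBA2, hnx]
          rw [show nx (emb m b + emb m a) (emb m b - emb m a) = ue a b from rfl, hdec1 a b]
        · have hBA : emb m b + emb m a = i + m := by linear_combination hc
          have hBA2 : emb m b - emb m a = j + m := by linear_combination hBA - h2A
          rw [hP2 i j, ← hBA, ← hBA2, hnx]
          rw [show nx (emb m b + emb m a) (emb m b - emb m a) = ue a b from rfl, hdec1 a b]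
      unfold vecA vecB
      rw [if_pos hpar, if_pos hpar2, key]
      push_cast
      ring
    · have hpar2 : ¬ 2 ∣ (i+j).val := fun h => hpar ((parity_add_sub m i j).1 h)
      set a := idx m (i-j) with hadef
      set b := idx m (i+j) with hbdef
      have key : x i j = ((c2 a + (r2 b + e2) : ℕ) : ℝ) := by
        have h2A := emb_idx_odd m (i-j) hpar
        have h2B := emb_idx_odd m (i+j) hpar2
        have htor : 2*((emb m b + emb m a + 1) - i) = 0 := by linear_combination h2A + h2B
        rcases (two_torsion m _).1 htor with hc | hc
        · have hBA : emb m b + emb m a + 1 = i := by linear_combination hc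
          have hBA2 : emb m b - emb m a = j := by linear_combination hBA - h2A
          rw [← hBA, ← hBA2, hnx]
          rw [show nx (emb m b + emb m a + 1) (emb m b - emb m a) = uo a b from rfl, hdec2 a b]
        · have hBA : emb m b + emb m a + 1 = i + m := by linear_combination hc
          have hBA2 : emb m b - emb m a = j + m := by linear_combination hBA - h2A
          rw [hP2 i j, ← hBA, ← hBA2, hnx]
          rw [show nx (emb m b + emb m a + 1) (emb m b - emb m a) = uo a b from rfl, hdec2 a b]
      unfold vecA vecB
      rw [if_neg hpar, if_neg hpar2, key]
      push_cast
      ring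

end Geom3

section Final
set_option linter.unusedSectionVars false
variable (m : ℕ) [NeZero (2*m)]

lemma ncard_eq (k : ℕ) :
    ({x | x ∈ (k : ℝ) • DP (2*m) ∧ IsInt (2*m) x}).ncard
      = Nat.card {t : Tup m // wT m t = k} := by
  have hset : {x | x ∈ (k : ℝ) • DP (2*m) ∧ IsInt (2*m) x} = Phi m '' {t | wT m t = k} := by
    ext x
    constructor
    · rintro ⟨hx, hint⟩
      obtain ⟨t, hw, hphi⟩ := recon m hx hint
      exact ⟨t, hw, hphi⟩
    · rintro ⟨t, hw, rfl⟩
      refine ⟨Phi_mem m t hw, ?_⟩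
      intro i j
      show ∃ z : ℤ, (vecA m t (i-j) + vecB m t (i+j)) = (z : ℝ)
      unfold vecA vecB
      split <;> split
      · exact ⟨((t.1.1.1.1 (idx m (i-j)) : ℕ) : ℤ) + ((t.1.1.2.1 (idx m (i+j)) + t.1.2 : ℕ) : ℤ),
          by push_cast; ring⟩
      · exact ⟨((t.1.1.1.1 (idx m (i-j)) : ℕ) : ℤ) + ((t.2.1.2.1 (idx m (i+j)) + t.2.2 : ℕ) : ℤ),
          by push_cast; ring⟩
      · exact ⟨((t.2.1.1.1 (idx m (i-j)) : ℕ) : ℤ) + ((t.1.1.2.1 (idx m (i+j)) + t.1.2 : ℕ) : ℤ),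
          by push_cast; ring⟩
      · exact ⟨((t.2.1.1.1 (idx m (i-j)) : ℕ) : ℤ) + ((t.2.1.2.1 (idx m (i+j)) + t.2.2 : ℕ) : ℤ),
          by push_cast; ring⟩
  rw [hset, Set.ncard_image_of_injOn (Function.Injective.injOn (Phi_injective m))]
  rw [← Nat.card_coe_set_eq]
  rfl

end Final


theorem count_pairs (m k : ℕ) :
    ((Finset.range m ×ˢ Finset.range m).filter (fun p => k = p.1 + p.2)).card
      = if k < 2*m - 1 then min (k+1) (2*m-1-k) else 0 := by
  have hcard : ((Finset.range m ×ˢ Finset.range m).filter (fun p => k = p.1 + p.2)).card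
      = (Finset.Ico (k+1-m) (min (k+1) m)).card := by
    apply Finset.card_bij' (fun p _ => p.1) (fun i _ => (i, k - i))
    · intro p hp
      simp only [Finset.mem_filter, Finset.mem_product, Finset.mem_range] at hp
      simp only [Finset.mem_Ico]
      omega
    · intro i hi
      simp only [Finset.mem_Ico] at hi
      simp only [Finset.mem_filter, Finset.mem_product, Finset.mem_range]
      omega
    · intro p hp
      simp only [Finset.mem_filter, Finset.mem_product, Finset.mem_range] at hp
      ext <;> simp <;> omega
    · intro i hi
      simp
  have hIco : (Finset.Ico (k+1-m) (min (k+1) m)).card = min (k+1) m - (k+1-m) := by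
    simp
  rw [hcard, hIco]
  by_cases h2 : k < 2*m - 1
  · rw [if_pos h2]; omega
  · rw [if_neg h2]; omega

theorem conj2 (m : ℕ) (hm : 2 ≤ m) :
    (∑ i ∈ Finset.range m, (PowerSeries.X : PowerSeries ℝ) ^ i) ^ 2
    = ∑ i ∈ Finset.range (2 * m - 1),
        PowerSeries.C ((min (i + 1) (2 * m - 1 - i) : ℕ) : ℝ) * PowerSeries.X ^ i := by
  ext k
  have hL : (PowerSeries.coeff k) ((∑ i ∈ Finset.range m, (X : PowerSeries ℝ)^i)^2)
      = (((Finset.range m ×ˢ Finset.range m).filter (fun p => k = p.1 + p.2)).card : ℝ) := by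
    rw [sq, Finset.sum_mul_sum, ← Finset.sum_product', map_sum]
    simp_rw [← pow_add, PowerSeries.coeff_X_pow]
    rw [Finset.sum_boole]
  have hR : (PowerSeries.coeff k) (∑ i ∈ Finset.range (2 * m - 1),
        PowerSeries.C ((min (i + 1) (2 * m - 1 - i) : ℕ) : ℝ) * PowerSeries.X ^ i)
      = if k < 2*m - 1 then ((min (k+1) (2*m-1-k) : ℕ) : ℝ) else 0 := by
    rw [map_sum]
    simp_rw [PowerSeries.coeff_C_mul, PowerSeries.coeff_X_pow]
    simp_rw [mul_ite, mul_one, mul_zero]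
    rw [Finset.sum_ite_eq (Finset.range (2*m-1)) k]
    simp [Finset.mem_range]
  rw [hL, hR, count_pairs]
  split <;> simp

/-- for even `n = 2m`, the `h*`-polynomial of `DP_n` equals
`(1 + t + ⋯ + t^{m-1})²`, whose coefficient vector is `(1,2,…,m-1,m,m-1,…,2,1)`. -/
theorem DP_even_hstar (m : ℕ) [NeZero (2 * m)] (hm : 2 ≤ m) :
    (PowerSeries.mk fun k : ℕ =>
        (({x | x ∈ (k : ℝ) • DP (2 * m) ∧ IsInt (2 * m) x}.ncard : ℝ)))
      * (1 - PowerSeries.X) ^ (2 * (2 * m) - 2)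
    = (∑ i ∈ Finset.range m, PowerSeries.X ^ i) ^ 2 ∧
    (∑ i ∈ Finset.range m, (PowerSeries.X : PowerSeries ℝ) ^ i) ^ 2
    = ∑ i ∈ Finset.range (2 * m - 1),
        PowerSeries.C ((min (i + 1) (2 * m - 1 - i) : ℕ) : ℝ) * PowerSeries.X ^ i := by
  constructor
  · have hser : (PowerSeries.mk fun k : ℕ =>
        (({x | x ∈ (k : ℝ) • DP (2 * m) ∧ IsInt (2 * m) x}.ncard : ℝ)))
        = ser (wT m) := by
      ext k
      simp only [ser, PowerSeries.coeff_mk]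
      rw [ncard_eq m k]
    rw [hser]
    exact main_series m hm
  · exact conj2 m hm
end
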